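/- arXiv:0907.0615 — 6 statements merged into one kernel-verified Lean document; each statement's English description precedes it below -/
import Mathlib

section
/- Let μ : Σ → Σ* be a morphism prolongable on a ∈ Σ with infinite fixed point μ^ω(a) = y₀y₁y₂⋯, and let S be the abstract numeration system built on the directive language L_{μ,a} of (μ,a) with the ordered alphabet ({0,…,r_μ−1}, 0<⋯<r_μ−1). Then for all n ≥ 0, y_n = δ_μ(a, rep_S(n)). -/
/-- Application of a morphism (letter-to-word map) to a word. -/
def applyMorphism {σ : Type*} (μ : σ → List σ) (w : List σ) : List σ :=
  (w.map μ).flatten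

/-- `morphIter μ a k` is the word `μ^k(a)`. -/
def morphIter {σ : Type*} (μ : σ → List σ) (a : σ) (k : ℕ) : List σ :=
  (applyMorphism μ)^[k] [a]

/-- `μ` is prolongable on `a`: `μ(a)` begins with the letter `a`. -/
def Prolongable {σ : Type*} (μ : σ → List σ) (a : σ) : Prop :=
  ∃ u, μ a = a :: u

/-- `y : ℕ → σ` is the infinite fixed point `μ^ω(a)`: every iterate `μ^k(a)` is a
prefix of `y`, and the lengths of the iterates are unbounded. -/
def IsOmegaFixedPoint {σ : Type*} (μ : σ → List σ) (a : σ) (y : ℕ → σ) : Prop :=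
  (∀ k n, n < (morphIter μ a k).length → (morphIter μ a k)[n]? = some (y n)) ∧
  (∀ N, ∃ k, N < (morphIter μ a k).length)

/-- The (partial) transition function `δ_μ` of the automaton `𝒜_{μ,a}` extended to
words of digits: `δ_μ(b,i) = (μ(b))_i` when `i < |μ(b)|`, undefined (`none`) otherwise. -/
def deltaW {σ : Type*} (μ : σ → List σ) (b : σ) (w : List ℕ) : Option σ :=
  List.foldlM (fun s i => (μ s)[i]?) b w

/-- The directive language `L_{μ,a}` : the words accepted by `𝒜_{μ,a}` (all states
are final, so acceptance means the run is defined) which do not have `0` as a prefix. -/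
def directive {σ : Type*} (μ : σ → List σ) (a : σ) : Set (List ℕ) :=
  {w | (deltaW μ a w).isSome = true ∧ w.head? ≠ some 0}

/-- Genealogical (radix, shortlex) order on words of digits. -/
def GenLtN (u v : List ℕ) : Prop :=
  u.length < v.length ∨ (u.length = v.length ∧ List.Lex (· < ·) u v)

/-- `rep` is the genealogical enumeration of the language `L`. -/
def IsANSEnum (L : Set (List ℕ)) (rep : ℕ → List ℕ) : Prop :=
  (∀ n, rep n ∈ L) ∧ (∀ w ∈ L, ∃ n, rep n = w) ∧
  (∀ m n, m < n → GenLtN (rep m) (rep n))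


section Aux
variable {σ : Type*}

def ypre (y : ℕ → σ) (n : ℕ) : List σ := (List.range n).map y

@[simp] lemma length_ypre (y : ℕ → σ) (n : ℕ) : (ypre y n).length = n := by
  simp [ypre]

lemma getElem?_ypre (y : ℕ → σ) {n m : ℕ} (h : n < m) : (ypre y m)[n]? = some (y n) := by
  simp [ypre, List.getElem?_map, List.getElem?_range h]

lemma eq_ypre_of (y : ℕ → σ) (l : List σ) (h : ∀ i, (hi : i < l.length) → l[i]? = some (y i)) :
    l = ypre y l.length := by
  apply List.ext_getElem?
  intro n
  by_cases hn : n < l.length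
  · rw [h n hn, getElem?_ypre y hn]
  · rw [List.getElem?_eq_none (by omega), List.getElem?_eq_none (by simp; omega)]

lemma ypre_prefix (y : ℕ → σ) {m n : ℕ} (h : m ≤ n) : ypre y m <+: ypre y n := by
  refine ⟨(List.range' m (n - m)).map y, ?_⟩
  rw [ypre, ypre, ← List.map_append]
  congr 1
  rw [List.range_eq_range', List.range_eq_range']
  have := @List.range'_append 0 m (n - m) 1
  simp only [one_mul, zero_add] at this
  rw [this]; congr 1; omega

lemma applyMorphism_append (μ : σ → List σ) (u v : List σ) :
    applyMorphism μ (u ++ v) = applyMorphism μ u ++ applyMorphism μ v := by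
  simp [applyMorphism]

lemma applyMorphism_prefix (μ : σ → List σ) {u v : List σ} (h : u <+: v) :
    applyMorphism μ u <+: applyMorphism μ v := by
  obtain ⟨t, rfl⟩ := h
  rw [applyMorphism_append]
  exact List.prefix_append _ _

lemma iterate_applyMorphism_prefix (μ : σ → List σ) {u v : List σ} (h : u <+: v) (k : ℕ) :
    (applyMorphism μ)^[k] u <+: (applyMorphism μ)^[k] v := by
  induction k with
  | zero => exact h
  | succ k ih =>
    rw [Function.iterate_succ_apply', Function.iterate_succ_apply']
    exact applyMorphism_prefix μ ih

end Aux


section Fix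
variable {σ : Type*} (μ : σ → List σ) (y : ℕ → σ)

def Sg (m : ℕ) : ℕ := (applyMorphism μ (ypre y m)).length

lemma ypre_succ (m : ℕ) : ypre y (m+1) = ypre y m ++ [y m] := by
  simp [ypre, List.range_succ]

lemma Sg_succ (m : ℕ) : Sg μ y (m+1) = Sg μ y m + (μ (y m)).length := by
  simp [Sg, ypre_succ, applyMorphism_append, applyMorphism]

lemma Sg_mono : Monotone (Sg μ y) := by
  apply monotone_nat_of_le_succ
  intro m; rw [Sg_succ]; omega

variable {μ} {y} (a : σ) (hfix : IsOmegaFixedPoint μ a y)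
include hfix

lemma morphIter_eq_ypre (k : ℕ) :
    morphIter μ a k = ypre y (morphIter μ a k).length :=
  eq_ypre_of y _ (fun i hi => hfix.1 k i hi)

lemma y_zero : y 0 = a := by
  have h := hfix.1 0 0 (by simp [morphIter])
  simp [morphIter] at h
  exact h.symm

lemma ypre_prefix_morphIter {m k : ℕ} (h : m ≤ (morphIter μ a k).length) :
    ypre y m <+: morphIter μ a k := by
  rw [morphIter_eq_ypre a hfix k]
  exact ypre_prefix y h

lemma image_ypre (m : ℕ) : applyMorphism μ (ypre y m) = ypre y (Sg μ y m) := by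
  obtain ⟨k, hk⟩ := hfix.2 m
  have hpre : applyMorphism μ (ypre y m) <+: morphIter μ a (k+1) := by
    have h1 := applyMorphism_prefix μ (ypre_prefix_morphIter a hfix (le_of_lt hk))
    rw [morphIter, Function.iterate_succ_apply']
    exact h1
  have hlen : (applyMorphism μ (ypre y m)).length ≤ (morphIter μ a (k+1)).length :=
    hpre.length_le
  refine eq_ypre_of y _ (fun i hi => ?_)
  obtain ⟨t, ht⟩ := hpre
  have : (applyMorphism μ (ypre y m))[i]? = (morphIter μ a (k+1))[i]? := by
    rw [← ht, List.getElem?_append, if_pos hi]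
  rw [this]
  exact hfix.1 (k+1) i (by omega)

lemma lt_Sg {m : ℕ} (hm : 1 ≤ m) : m < Sg μ y m := by
  by_contra hc
  push_neg at hc
  have key : ∀ k, ∃ s ≤ m, (applyMorphism μ)^[k] (ypre y m) = ypre y s := by
    intro k
    induction k with
    | zero => exact ⟨m, le_rfl, rfl⟩
    | succ k ih =>
      obtain ⟨s, hs, hes⟩ := ih
      exact ⟨Sg μ y s, le_trans (Sg_mono μ y hs) hc,
        by rw [Function.iterate_succ_apply', hes, image_ypre a hfix]⟩
  obtain ⟨k, hk⟩ := hfix.2 m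
  obtain ⟨s, hs, hes⟩ := key k
  have h1 : [a] <+: ypre y m := by
    have h2 : ypre y 1 = [a] := by rw [ypre, show List.range 1 = [0] from rfl]; simp [y_zero a hfix]
    rw [← h2]; exact ypre_prefix y hm
  have hpre : morphIter μ a k <+: ypre y s := by
    rw [← hes, morphIter]
    exact iterate_applyMorphism_prefix μ h1 k
  have := hpre.length_le
  simp at this
  omega

end Fix


section Par
variable {σ : Type*} (μ : σ → List σ) (y : ℕ → σ)

@[simp] lemma Sg_zero : Sg μ y 0 = 0 := by simp [Sg, ypre, applyMorphism]

variable (H : ∀ n : ℕ, n < Sg μ y (n+1))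

def par (n : ℕ) : ℕ := Nat.find (⟨n, H n⟩ : ∃ m, n < Sg μ y (m+1))

lemma par_le (n : ℕ) : par μ y H n ≤ n := Nat.find_le (H n)

lemma lt_Sg_par_succ (n : ℕ) : n < Sg μ y (par μ y H n + 1) :=
  Nat.find_spec (⟨n, H n⟩ : ∃ m, n < Sg μ y (m+1))

lemma Sg_par_le (n : ℕ) : Sg μ y (par μ y H n) ≤ n := by
  rcases Nat.eq_zero_or_pos (par μ y H n) with h | h
  · simp [h]
  · have := Nat.find_min (⟨n, H n⟩ : ∃ m, n < Sg μ y (m+1))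
      (show par μ y H n - 1 < par μ y H n by omega)
    have h2 : par μ y H n - 1 + 1 = par μ y H n := by omega
    rw [h2] at this
    omega

lemma par_eq_of (n m : ℕ) (h1 : Sg μ y m ≤ n) (h2 : n < Sg μ y (m+1)) :
    par μ y H n = m := by
  have hle : par μ y H n ≤ m := Nat.find_le h2
  by_contra hne
  have hlt : par μ y H n < m := by omega
  have := lt_Sg_par_succ μ y H n
  have hm := Sg_mono μ y (show par μ y H n + 1 ≤ m by omega)
  omega

variable (HD : ∀ m : ℕ, 1 ≤ m → m < Sg μ y m)
include HD in

lemma par_lt_self {n : ℕ} (hn : 1 ≤ n) : par μ y H n < n := by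
  have h1 : par μ y H n ≤ n - 1 := Nat.find_le (by
    rw [show n - 1 + 1 = n by omega]; exact HD n hn)
  omega

def gAux : ℕ → ℕ → List ℕ
  | 0, _ => []
  | (fuel+1), n =>
    if n = 0 then [] else
      gAux fuel (par μ y H n) ++ [n - Sg μ y (par μ y H n)]

include HD in
lemma gAux_congr : ∀ f1 f2 n, n ≤ f1 → n ≤ f2 →
    gAux μ y H f1 n = gAux μ y H f2 n := by
  intro f1
  induction f1 with
  | zero =>
    intro f2 n h1 _
    have : n = 0 := by omega
    subst this
    cases f2 <;> simp [gAux]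
  | succ f1 ih =>
    intro f2 n h1 h2
    rcases Nat.eq_zero_or_pos n with rfl | hn
    · cases f2 <;> simp [gAux]
    · obtain ⟨f2', rfl⟩ : ∃ f2', f2 = f2' + 1 := ⟨f2 - 1, by omega⟩
      have hp := par_lt_self μ y H HD (n := n) hn
      simp only [gAux, if_neg (by omega : n ≠ 0)]
      rw [ih f2' (par μ y H n) (by omega) (by omega)]

def gfun (n : ℕ) : List ℕ := gAux μ y H n n

@[simp] lemma gfun_zero : gfun μ y H 0 = [] := rfl

include HD in
lemma gfun_succ {n : ℕ} (hn : 1 ≤ n) :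
    gfun μ y H n = gfun μ y H (par μ y H n) ++ [n - Sg μ y (par μ y H n)] := by
  obtain ⟨k, rfl⟩ : ∃ k, n = k + 1 := ⟨n - 1, by omega⟩
  have hp := par_lt_self μ y H HD (n := k+1) hn
  show gAux μ y H (k+1) (k+1) = _
  simp only [gAux, if_neg (by omega : k + 1 ≠ 0)]
  rw [gAux_congr μ y H HD k (par μ y H (k+1)) (par μ y H (k+1)) (by omega) le_rfl]
  rfl

include HD in
lemma gfun_ne_nil {n : ℕ} (hn : 1 ≤ n) : gfun μ y H n ≠ [] := by
  rw [gfun_succ μ y H HD hn]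
  simp

end Par


section Props
variable {σ : Type*} {μ : σ → List σ} {y : ℕ → σ} (a : σ)
variable (H : ∀ n : ℕ, n < Sg μ y (n+1)) (HD : ∀ m : ℕ, 1 ≤ m → m < Sg μ y m)
variable (hfix : IsOmegaFixedPoint μ a y)

lemma deltaW_append_singleton (b : σ) (u : List ℕ) (i : ℕ) :
    deltaW μ b (u ++ [i]) = (deltaW μ b u).bind (fun s => (μ s)[i]?) := by
  rw [deltaW, List.foldlM_append]
  cases h : List.foldlM (fun s i => (μ s)[i]?) b u <;>
    simp [deltaW, h, List.foldlM]

include hfix in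
lemma letter_eq (n : ℕ) :
    (μ (y (par μ y H n)))[n - Sg μ y (par μ y H n)]? = some (y n) := by
  set m := par μ y H n with hm
  have h1 : Sg μ y m ≤ n := Sg_par_le μ y H n
  have h2 : n < Sg μ y (m+1) := lt_Sg_par_succ μ y H n
  have himg := image_ypre a hfix (m+1)
  rw [ypre_succ, applyMorphism_append] at himg
  have hsingle : applyMorphism μ [y m] = μ (y m) := by simp [applyMorphism]
  rw [hsingle, image_ypre a hfix m] at himg
  have := congrArg (fun l => l[n]?) himg
  rw [List.getElem?_append, if_neg (by simp; omega)] at this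
  simp only [length_ypre] at this
  rw [this, getElem?_ypre y h2]

include HD hfix in
lemma deltaW_gfun (n : ℕ) : deltaW μ a (gfun μ y H n) = some (y n) := by
  induction n using Nat.strong_induction_on with
  | _ n ih =>
    rcases Nat.eq_zero_or_pos n with rfl | hn
    · simp only [gfun_zero]
      rw [deltaW, List.foldlM_nil, y_zero a hfix]
      rfl
    · rw [gfun_succ μ y H HD hn, deltaW_append_singleton,
        ih _ (par_lt_self μ y H HD hn)]
      exact letter_eq a H hfix n

omit hfix in
include HD in
lemma gfun_head (n : ℕ) : (gfun μ y H n).head? ≠ some 0 := by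
  induction n using Nat.strong_induction_on with
  | _ n ih =>
    rcases Nat.eq_zero_or_pos n with rfl | hn
    · simp
    · rw [gfun_succ μ y H HD hn, List.head?_append]
      rcases Nat.eq_zero_or_pos (par μ y H n) with hp | hp
      · rw [hp]
        simp only [gfun_zero, List.head?_nil, Option.none_or, List.head?_cons]
        rw [hp] at *
        simp only [Sg_zero, Nat.sub_zero]
        intro hc
        simp at hc
        omega
      · have hne := gfun_ne_nil μ y H HD hp
        cases hg : gfun μ y H (par μ y H n) with
        | nil => exact absurd hg hne
        | cons b t =>
          have := ih _ (par_lt_self μ y H HD hn)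
          rw [hg] at this
          simpa using this

include HD hfix in
lemma gfun_mem (n : ℕ) : gfun μ y H n ∈ directive μ a := by
  refine ⟨?_, gfun_head H HD n⟩
  rw [deltaW_gfun a H HD hfix n]
  rfl

end Props


section Mono
variable {σ : Type*} {μ : σ → List σ} {y : ℕ → σ} (a : σ)
variable (H : ∀ n : ℕ, n < Sg μ y (n+1)) (HD : ∀ m : ℕ, 1 ≤ m → m < Sg μ y m)
variable (hfix : IsOmegaFixedPoint μ a y)

lemma par_mono {m n : ℕ} (h : m ≤ n) : par μ y H m ≤ par μ y H n := by
  by_contra hc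
  push_neg at hc
  have h1 := Sg_par_le μ y H m
  have h2 := lt_Sg_par_succ μ y H n
  have h3 := Sg_mono μ y (show par μ y H n + 1 ≤ par μ y H m by omega)
  omega

lemma lex_append_of {r : ℕ → ℕ → Prop} {u v : List ℕ} (h : List.Lex r u v)
    (hl : u.length = v.length) (s t : List ℕ) : List.Lex r (u ++ s) (v ++ t) := by
  induction h with
  | nil => simp at hl
  | @cons a l1 l2 h ih => exact List.Lex.cons (ih (by simpa using hl))
  | rel hab => exact List.Lex.rel hab

lemma lex_append_last {r : ℕ → ℕ → Prop} (u : List ℕ) {i j : ℕ} (h : r i j) :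
    List.Lex r (u ++ [i]) (u ++ [j]) := by
  induction u with
  | nil => exact List.Lex.rel h
  | cons a t ih => exact List.Lex.cons ih

include HD in
lemma gfun_strictMono : ∀ n m, m < n → GenLtN (gfun μ y H m) (gfun μ y H n) := by
  intro n
  induction n using Nat.strong_induction_on with
  | _ n ih =>
    intro m hmn
    have hn : 1 ≤ n := by omega
    rcases Nat.eq_zero_or_pos m with rfl | hm
    · left
      simp only [gfun_zero, List.length_nil]
      exact List.length_pos_iff.2 (gfun_ne_nil μ y H HD hn)
    · have hpm := par_lt_self μ y H HD hm
      have hpn := par_lt_self μ y H HD hn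
      have hple : par μ y H m ≤ par μ y H n := par_mono H (le_of_lt hmn)
      rw [gfun_succ μ y H HD hm, gfun_succ μ y H HD hn]
      rcases lt_or_eq_of_le hple with hlt | heq
      · rcases ih (par μ y H n) hpn (par μ y H m) hlt with h | ⟨hl, hx⟩
        · left
          simp only [List.length_append, List.length_cons, List.length_nil]
          omega
        · right
          constructor
          · simp [hl]
          · exact lex_append_of hx hl _ _
      · rw [heq]
        right
        refine ⟨by simp, lex_append_last _ ?_⟩
        have h1 := Sg_par_le μ y H m
        rw [heq] at h1
        omega

include HD hfix in
lemma gfun_surj : ∀ w ∈ directive μ a, ∃ n, gfun μ y H n = w := by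
  intro w hw
  induction w using List.reverseRecOn with
  | nil => exact ⟨0, rfl⟩
  | append_singleton u i ih =>
    obtain ⟨hws, hwh⟩ := hw
    rw [deltaW_append_singleton] at hws
    have hus : (deltaW μ a u).isSome = true := by
      cases h : deltaW μ a u with
      | none => rw [h] at hws; simp at hws
      | some b => rfl
    have huh : u.head? ≠ some 0 := by
      cases u with
      | nil => simp
      | cons b t =>
        simp only [List.cons_append, List.head?_cons] at hwh ⊢
        exact hwh
    obtain ⟨m, hm⟩ := ih ⟨hus, huh⟩
    have hdm : deltaW μ a u = some (y m) := by
      rw [← hm]; exact deltaW_gfun a H HD hfix m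
    rw [hdm] at hws
    simp only [Option.bind_some] at hws
    have hi : i < (μ (y m)).length := by
      by_contra hc
      rw [List.getElem?_eq_none (by omega)] at hws
      simp at hws
    set n := Sg μ y m + i with hn
    have hpar : par μ y H n = m :=
      par_eq_of μ y H n m (by omega) (by rw [Sg_succ]; omega)
    have hn1 : 1 ≤ n := by
      rcases Nat.eq_zero_or_pos m with rfl | hm1
      · have hi0 : i ≠ 0 := by
          rw [← hm] at hwh
          simp only [gfun_zero, List.nil_append, List.head?_cons] at hwh
          exact fun h => hwh (by rw [h])
        have h0 : Sg μ y 0 = 0 := Sg_zero μ y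
        omega
      · have := HD m hm1
        omega
    refine ⟨n, ?_⟩
    rw [gfun_succ μ y H HD hn1, hpar, hm]
    congr 2
    omega

lemma lex_irrefl {r : ℕ → ℕ → Prop} (hr : ∀ x, ¬ r x x) :
    ∀ u : List ℕ, ¬ List.Lex r u u := by
  intro u h
  induction u with
  | nil => cases h
  | cons a t ih =>
    cases h with
    | cons h => exact ih h
    | rel h => exact hr a h

lemma lex_trans {r : ℕ → ℕ → Prop} (hr : Transitive r) :
    ∀ {u v w : List ℕ}, List.Lex r u v → List.Lex r v w → List.Lex r u w := by
  intro u v w h1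
  induction h1 generalizing w with
  | nil =>
    intro h2
    cases h2 with
    | cons _ => exact List.Lex.nil
    | rel _ => exact List.Lex.nil
  | @cons a l1 l2 h ih =>
    intro h2
    cases h2 with
    | cons h2' => exact List.Lex.cons (ih h2')
    | rel hab => exact List.Lex.rel hab
  | @rel a l1 b l2 hab =>
    intro h2
    cases h2 with
    | cons h2' => exact List.Lex.rel hab
    | rel hbc => exact List.Lex.rel (hr hab hbc)

lemma genltn_irrefl (u : List ℕ) : ¬ GenLtN u u := by
  rintro (h | ⟨-, h⟩)
  · omega
  · exact lex_irrefl (fun x => lt_irrefl x) u h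

lemma genltn_trans {u v w : List ℕ} (h1 : GenLtN u v) (h2 : GenLtN v w) : GenLtN u w := by
  rcases h1 with h1 | ⟨e1, l1⟩ <;> rcases h2 with h2 | ⟨e2, l2⟩
  · exact Or.inl (by omega)
  · exact Or.inl (by omega)
  · exact Or.inl (by omega)
  · exact Or.inr ⟨e1.trans e2, lex_trans (r := (· < ·)) (fun _ _ _ h1 h2 => lt_trans h1 h2) l1 l2⟩

end Mono


/-- Lemma `lem:dir`, first part. Let `μ` be prolongable on `a` with
infinite fixed point `μ^ω(a) = y₀y₁y₂⋯` and let `S` be the abstract numeration system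
built on the directive language `L_{μ,a}` (digits ordered naturally). Then for all
`n ≥ 0`, `y_n = δ_μ(a, rep_S(n))`. -/
theorem stmt_2 {σ : Type*} (μ : σ → List σ) (a : σ) (y : ℕ → σ)
    (hprol : Prolongable μ a) (hfix : IsOmegaFixedPoint μ a y)
    (rep : ℕ → List ℕ) (hrep : IsANSEnum (directive μ a) rep) :
    ∀ n, deltaW μ a (rep n) = some (y n) := by
  have HD : ∀ m : ℕ, 1 ≤ m → m < Sg μ y m := fun m hm => lt_Sg a hfix hm
  have H : ∀ k : ℕ, k < Sg μ y (k+1) := fun k => by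
    have := HD (k+1) (by omega); omega
  obtain ⟨hmem, hsurj, hmono⟩ := hrep
  have key : ∀ n, rep n = gfun μ y H n := by
    intro n
    induction n using Nat.strong_induction_on with
    | _ n ih =>
      obtain ⟨j, hj⟩ := gfun_surj a H HD hfix (rep n) (hmem n)
      rcases lt_trichotomy j n with hlt | rfl | hgt
      · exfalso
        have hmn := hmono j n hlt
        rw [ih j hlt, hj] at hmn
        exact genltn_irrefl _ hmn
      · exact hj.symm
      · obtain ⟨j', hj'⟩ := hsurj (gfun μ y H n) (gfun_mem a H HD hfix n)
        rcases lt_trichotomy j' n with hlt' | rfl | hgt'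
        · exfalso
          have hsm := gfun_strictMono H HD n j' hlt'
          have e : gfun μ y H j' = gfun μ y H n := by rw [← ih j' hlt', hj']
          rw [e] at hsm
          exact genltn_irrefl _ hsm
        · exact hj'
        · exfalso
          have h1 := hmono n j' hgt'
          rw [hj'] at h1
          have h2 := gfun_strictMono H HD j n hgt
          rw [hj] at h2
          exact genltn_irrefl _ (genltn_trans h1 h2)
  intro n
  rw [key n]
  exact deltaW_gfun a H HD hfix n
end

section
/- Let μ : Σ → Σ* be a morphism prolongable on a ∈ Σ with infinite fixed point μ^ω(a) = y₀y₁y₂⋯, and let S be the abstract numeration system built on the directive language L_{μ,a} of (μ,a) with the ordered alphabet ({0,…,r_μ−1}, 0<⋯<r_μ−1). Let n ≥ 1 and write rep_S(n) = w₀w₁⋯w_ℓ with each w_j a digit. Define the finite words z₀ := μ(a) and z_{j+1} := μ((z_j)_{w_j}) for j = 0,…,ℓ−1, where (z_j)_{w_j} denotes the letter of z_j at position w_j. Then y_n = (z_ℓ)_{w_ℓ}. -/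
namespace Stmt4Aux

variable {σ : Type*} (μ : σ → List σ) (y : ℕ → σ)

/-- sum of lengths of μ-images of first m letters of y -/
def T (m : ℕ) : ℕ := ((List.range m).map (fun t => (μ (y t)).length)).sum

def Good : ℕ → List ℕ → Prop
  | _, [] => True
  | m, i :: s => i < (μ (y m)).length ∧ Good (T μ y m + i) s

def posF (m : ℕ) (s : List ℕ) : ℕ := s.foldl (fun p i => T μ y p + i) m

lemma T_succ (m : ℕ) : T μ y (m + 1) = T μ y m + (μ (y m)).length := by
  simp [T, List.range_succ]

lemma T_mono : Monotone (T μ y) := by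
  apply monotone_nat_of_le_succ
  intro n
  rw [T_succ]; omega

lemma posF_nil (m : ℕ) : posF μ y m [] = m := rfl

lemma posF_cons (m i : ℕ) (s : List ℕ) :
    posF μ y m (i :: s) = posF μ y (T μ y m + i) s := rfl

lemma posF_append (m : ℕ) (s t : List ℕ) :
    posF μ y m (s ++ t) = posF μ y (posF μ y m s) t := by
  simp [posF, List.foldl_append]

lemma Good_append (m : ℕ) (s t : List ℕ) :
    Good μ y m (s ++ t) ↔ Good μ y m s ∧ Good μ y (posF μ y m s) t := by
  induction s generalizing m with
  | nil => simp [Good, posF_nil]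
  | cons i s ih =>
      simp only [List.cons_append, Good, posF_cons, List.append_eq, ih]
      tauto

lemma applyMorphism_append (u v : List σ) :
    applyMorphism μ (u ++ v) = applyMorphism μ u ++ applyMorphism μ v := by
  simp [applyMorphism]

lemma applyMorphism_prefix {u v : List σ} (h : u <+: v) :
    applyMorphism μ u <+: applyMorphism μ v := by
  obtain ⟨t, rfl⟩ := h
  exact ⟨applyMorphism μ t, (applyMorphism_append μ u t).symm⟩


variable (a : σ)

lemma morphIter_succ (k : ℕ) :
    morphIter μ a (k + 1) = applyMorphism μ (morphIter μ a k) := by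
  simp [morphIter, Function.iterate_succ_apply']

lemma y_zero (hfix : IsOmegaFixedPoint μ a y) : y 0 = a := by
  have h := hfix.1 0 0 (by simp [morphIter])
  simp [morphIter] at h
  exact h.symm

lemma prefix_eq (hfix : IsOmegaFixedPoint μ a y) (k : ℕ) :
    morphIter μ a k = (List.range (morphIter μ a k).length).map y := by
  apply List.ext_getElem (by simp)
  intro n h1 h2
  have h := hfix.1 k n h1
  rw [List.getElem?_eq_getElem h1] at h
  simp at h ⊢
  exact h

lemma yw_prefix {m m' : ℕ} (h : m ≤ m') :
    (List.range m).map y <+: (List.range m').map y := by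
  have : (List.range m).map y = ((List.range m').map y).take m := by
    rw [← List.map_take, List.take_range, Nat.min_eq_left h]
  rw [this]
  exact List.take_prefix _ _

lemma T_eq (m : ℕ) : (applyMorphism μ ((List.range m).map y)).length = T μ y m := by
  simp [applyMorphism, T, Function.comp]
  rfl

lemma prefix_y (hfix : IsOmegaFixedPoint μ a y) (m n : ℕ) (hn : n < T μ y m) :
    (applyMorphism μ ((List.range m).map y))[n]? = some (y n) := by
  obtain ⟨k, hk⟩ := hfix.2 m
  have hpre : (List.range m).map y <+: morphIter μ a k := by
    rw [prefix_eq μ y a hfix k]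
    exact yw_prefix y (le_of_lt hk)
  have hpre2 : applyMorphism μ ((List.range m).map y) <+: morphIter μ a (k+1) := by
    rw [morphIter_succ]
    exact applyMorphism_prefix μ hpre
  obtain ⟨t, ht⟩ := hpre2
  have hlen : n < (applyMorphism μ ((List.range m).map y)).length := by
    rw [T_eq]; exact hn
  have : (morphIter μ a (k+1))[n]? = some (y n) := by
    apply hfix.1
    rw [← ht]
    simp
    omega
  rw [← ht, List.getElem?_append, if_pos hlen] at this
  exact this

lemma letter_eq (hfix : IsOmegaFixedPoint μ a y) (m i : ℕ) (hi : i < (μ (y m)).length) :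
    (μ (y m))[i]? = some (y (T μ y m + i)) := by
  have h1 : (List.range (m+1)).map y = (List.range m).map y ++ [y m] := by
    rw [List.range_succ]; simp
  have h2 : applyMorphism μ ((List.range (m+1)).map y)
      = applyMorphism μ ((List.range m).map y) ++ μ (y m) := by
    rw [h1, applyMorphism_append]
    simp [applyMorphism]
  have h3 := prefix_y μ y a hfix (m+1) (T μ y m + i) (by rw [T_succ]; omega)
  rw [h2, List.getElem?_append_right (by rw [T_eq]; omega)] at h3
  rw [T_eq] at h3
  simpa using h3

lemma deltaW_nil (b : σ) : deltaW μ b [] = some b := rfl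

lemma deltaW_cons (b : σ) (i : ℕ) (s : List ℕ) :
    deltaW μ b (i :: s) = (μ b)[i]?.bind (fun b' => deltaW μ b' s) := by
  simp [deltaW, List.foldlM]

lemma deltaW_eq_y (hfix : IsOmegaFixedPoint μ a y) :
    ∀ (s : List ℕ) (m : ℕ), Good μ y m s → deltaW μ (y m) s = some (y (posF μ y m s)) := by
  intro s
  induction s with
  | nil => intro m _; simp [deltaW_nil, posF_nil]
  | cons i s ih =>
      intro m hg
      obtain ⟨hi, hg'⟩ := hg
      rw [deltaW_cons, letter_eq μ y a hfix m i hi]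
      simp only [Option.bind_some]
      rw [posF_cons]
      exact ih _ hg'

lemma good_of_deltaW (hfix : IsOmegaFixedPoint μ a y) :
    ∀ (s : List ℕ) (m : ℕ), (deltaW μ (y m) s).isSome → Good μ y m s := by
  intro s
  induction s with
  | nil => intro m _; trivial
  | cons i s ih =>
      intro m h
      rw [deltaW_cons] at h
      have hi : i < (μ (y m)).length := by
        by_contra hc
        rw [List.getElem?_eq_none (by omega)] at h
        simp at h
      rw [letter_eq μ y a hfix m i hi] at h
      simp only [Option.bind_some] at h
      exact ⟨hi, ih _ h⟩

lemma T_zero : T μ y 0 = 0 := by simp [T]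

lemma posF_snoc (m i : ℕ) (s : List ℕ) :
    posF μ y m (s ++ [i]) = T μ y (posF μ y m s) + i := by
  rw [posF_append]; rfl

lemma Good_snoc (m i : ℕ) (s : List ℕ) :
    Good μ y m (s ++ [i]) ↔ Good μ y m s ∧ i < (μ (y (posF μ y m s))).length := by
  rw [Good_append]
  simp [Good]

lemma morphIter_zero : morphIter μ a 0 = [a] := rfl

lemma morphIter_prefix (hprol : Prolongable μ a) (k : ℕ) :
    morphIter μ a k <+: morphIter μ a (k + 1) := by
  induction k with
  | zero =>
      obtain ⟨u, hu⟩ := hprol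
      rw [morphIter_zero, morphIter_succ, morphIter_zero]
      refine ⟨u, ?_⟩
      simp [applyMorphism, hu]
  | succ k ih =>
      rw [morphIter_succ, morphIter_succ μ a (k+1)]
      exact applyMorphism_prefix μ ih

lemma g_mono (hprol : Prolongable μ a) : Monotone (fun k => (morphIter μ a k).length) := by
  apply monotone_nat_of_le_succ
  intro k
  exact (morphIter_prefix μ a hprol k).length_le

lemma g_succ (hfix : IsOmegaFixedPoint μ a y) (k : ℕ) :
    (morphIter μ a (k + 1)).length = T μ y ((morphIter μ a k).length) := by
  conv_lhs => rw [morphIter_succ, prefix_eq μ y a hfix k]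
  exact T_eq μ y _

lemma bounds (hprol : Prolongable μ a) (hfix : IsOmegaFixedPoint μ a y) :
    ∀ w : List ℕ, Good μ y 0 w → w.head? ≠ some 0 → w ≠ [] →
      (morphIter μ a (w.length - 1)).length ≤ posF μ y 0 w ∧
      posF μ y 0 w < (morphIter μ a w.length).length := by
  intro w
  induction w using List.reverseRecOn with
  | nil => intro _ _ h; exact absurd rfl h
  | append_singleton s i ih =>
      intro hg hh _
      rw [Good_snoc] at hg
      obtain ⟨hgs, hi⟩ := hg
      rcases eq_or_ne s [] with rfl | hs
      · have hpos : posF μ y 0 ([] ++ [i]) = i := by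
          rw [List.nil_append, posF_cons, posF_nil, T_zero]
          omega
        have hi0 : i ≠ 0 := by
          simpa using hh
        have hg1 : (morphIter μ a 1).length = T μ y 1 := by
          have := g_succ μ y a hfix 0
          simpa [morphIter_zero] using this
        rw [posF_nil] at hi
        have hlen1 : ([] ++ [i] : List ℕ).length = 1 := by simp
        constructor
        · rw [hpos, hlen1]
          simp [morphIter_zero]
          omega
        · rw [hpos, hlen1, hg1, T_succ, T_zero]
          omega
      · have hh' : s.head? ≠ some 0 := by
          obtain ⟨x, s', rfl⟩ := List.exists_cons_of_ne_nil hs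
          simpa using hh
        obtain ⟨hlo, hhi⟩ := ih hgs hh' hs
        set m := posF μ y 0 s with hm
        have hslen : 1 ≤ s.length := List.length_pos_iff.mpr hs
        have hlen : (s ++ [i]).length = s.length + 1 := by simp
        rw [posF_snoc, ← hm]
        constructor
        · rw [hlen]
          simp only [Nat.add_sub_cancel]
          have h1 : (morphIter μ a s.length).length = T μ y ((morphIter μ a (s.length - 1)).length) := by
            have := g_succ μ y a hfix (s.length - 1)
            rwa [Nat.sub_add_cancel hslen] at this
          rw [h1]
          have := T_mono μ y hlo
          omega
        · rw [hlen]
          have h1 : (morphIter μ a (s.length + 1)).length = T μ y ((morphIter μ a s.length).length) := g_succ μ y a hfix s.length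
          rw [h1]
          have h2 : T μ y (m + 1) ≤ T μ y ((morphIter μ a s.length).length) := T_mono μ y hhi
          rw [T_succ] at h2
          omega

lemma mono_same_len (hfix : IsOmegaFixedPoint μ a y) :
    ∀ (s t : List ℕ) (m m' : ℕ), s.length = t.length → m < m' →
      Good μ y m s → Good μ y m' t → posF μ y m s < posF μ y m' t := by
  intro s
  induction s with
  | nil =>
      intro t m m' hlen hmm _ _
      rw [List.length_nil] at hlen
      obtain rfl : t = [] := (List.length_eq_zero_iff.mp hlen.symm)
      simpa [posF_nil] using hmm
  | cons i s ih =>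
      intro t m m' hlen hmm hgs hgt
      obtain ⟨j, t', rfl⟩ : ∃ j t', t = j :: t' := by
        cases t with
        | nil => simp at hlen
        | cons j t' => exact ⟨j, t', rfl⟩
      obtain ⟨hi, hgs'⟩ := hgs
      obtain ⟨hj, hgt'⟩ := hgt
      rw [posF_cons, posF_cons]
      apply ih t' _ _ (by simpa using hlen)
      · calc T μ y m + i < T μ y m + (μ (y m)).length := by omega
          _ = T μ y (m + 1) := (T_succ μ y m).symm
          _ ≤ T μ y m' := T_mono μ y hmm
          _ ≤ T μ y m' + j := by omega
      · exact hgs'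
      · exact hgt'

lemma lex_dec : ∀ (u v : List ℕ), List.Lex (· < ·) u v → u.length = v.length →
    ∃ (p : List ℕ) (i j : ℕ) (u' v' : List ℕ),
      u = p ++ i :: u' ∧ v = p ++ j :: v' ∧ i < j := by
  intro u v h
  induction h with
  | nil => intro hlen; simp at hlen
  | @rel i u' j v' hij =>
      intro _
      exact ⟨[], i, j, u', v', rfl, rfl, hij⟩
  | @cons x u' v' _ ih =>
      intro hlen
      simp only [List.length_cons, Nat.add_right_cancel_iff] at hlen
      obtain ⟨p, i, j, u'', v'', hu, hv, hij⟩ := ih hlen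
      exact ⟨x :: p, i, j, u'', v'', by simp [hu], by simp [hv], hij⟩

lemma mono_full (hprol : Prolongable μ a) (hfix : IsOmegaFixedPoint μ a y)
    (u v : List ℕ) (hgu : Good μ y 0 u) (hhu : u.head? ≠ some 0)
    (hgv : Good μ y 0 v) (hhv : v.head? ≠ some 0) (h : GenLtN u v) :
    posF μ y 0 u < posF μ y 0 v := by
  rcases h with hlen | ⟨hlen, hlex⟩
  · have hv : v ≠ [] := by
      intro h; subst h; simp at hlen
    have hbv := bounds μ y a hprol hfix v hgv hhv hv
    rcases eq_or_ne u [] with rfl | hu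
    · rw [posF_nil]
      have h1 : (morphIter μ a 0).length ≤ (morphIter μ a (v.length - 1)).length :=
        g_mono μ a hprol (Nat.zero_le _)
      rw [morphIter_zero] at h1
      simp at h1
      omega
    · have hbu := bounds μ y a hprol hfix u hgu hhu hu
      have h1 : (morphIter μ a u.length).length ≤ (morphIter μ a (v.length - 1)).length := by
        apply g_mono μ a hprol
        omega
      omega
  · obtain ⟨p, i, j, u', v', rfl, rfl, hij⟩ := lex_dec _ _ hlex hlen
    rw [Good_append] at hgu hgv
    obtain ⟨hgp, hgu'⟩ := hgu
    obtain ⟨-, hgv'⟩ := hgv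
    set m0 := posF μ y 0 p with hm0
    rw [posF_append, posF_append, ← hm0, posF_cons, posF_cons]
    obtain ⟨hi, hgu''⟩ := hgu'
    obtain ⟨hj, hgv''⟩ := hgv'
    apply mono_same_len μ y a hfix u' v' _ _ _ _ hgu'' hgv''
    · have := hlen
      simp at this
      omega
    · omega

lemma surj_aux (hprol : Prolongable μ a) (hfix : IsOmegaFixedPoint μ a y) :
    ∀ (ℓ n : ℕ), n < (morphIter μ a ℓ).length →
      ∃ w, Good μ y 0 w ∧ w.head? ≠ some 0 ∧ posF μ y 0 w = n := by
  intro ℓ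
  induction ℓ with
  | zero =>
      intro n hn
      rw [morphIter_zero] at hn
      simp at hn
      subst hn
      exact ⟨[], trivial, by simp, posF_nil μ y 0⟩
  | succ ℓ ih =>
      intro n hn
      rcases Nat.lt_or_ge n (morphIter μ a ℓ).length with h | h
      · exact ih n h
      · rw [g_succ μ y a hfix ℓ] at hn
        have hex : ∃ m', n < T μ y m' := ⟨(morphIter μ a ℓ).length, hn⟩
        classical
        set m' := Nat.find hex with hm'
        have hfind := Nat.find_spec hex
        have hm'pos : 1 ≤ m' := by
          rcases Nat.eq_zero_or_pos m' with h0 | h0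
          · rw [← hm'] at hfind
            rw [h0, T_zero] at hfind
            omega
          · exact h0
        set m := m' - 1 with hmdef
        have hTm : T μ y m ≤ n := by
          have := Nat.find_min hex (m := m) (by omega)
          omega
        have hTm1 : n < T μ y (m + 1) := by
          have : m + 1 = m' := by omega
          rw [this]
          exact hfind
        have hmlt : m < (morphIter μ a ℓ).length := by
          by_contra hc
          push_neg at hc
          have : T μ y ((morphIter μ a ℓ).length) ≤ T μ y m := T_mono μ y hc
          omega
        obtain ⟨u, hgu, hhu, hpu⟩ := ih m hmlt
        have hilt : n - T μ y m < (μ (y m)).length := by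
          rw [T_succ] at hTm1
          omega
        refine ⟨u ++ [n - T μ y m], ?_, ?_, ?_⟩
        · rw [Good_snoc, hpu]
          exact ⟨hgu, hilt⟩
        · rcases eq_or_ne u [] with rfl | hu
          · have hm0 : m = 0 := by
              rw [posF_nil] at hpu
              omega
            have hglen : 1 ≤ (morphIter μ a ℓ).length := by
              have h1 : (morphIter μ a 0).length ≤ (morphIter μ a ℓ).length :=
                g_mono μ a hprol (Nat.zero_le _)
              rw [morphIter_zero] at h1
              simpa using h1
            have : n - T μ y m ≠ 0 := by
              rw [hm0, T_zero]
              omega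
            simpa using this
          · obtain ⟨x, s', rfl⟩ := List.exists_cons_of_ne_nil hu
            simpa using hhu
        · rw [posF_snoc, hpu]
          omega

lemma enum_eq (hprol : Prolongable μ a) (hfix : IsOmegaFixedPoint μ a y)
    (rep : ℕ → List ℕ) (hrep : IsANSEnum (directive μ a) rep) :
    ∀ n, posF μ y 0 (rep n) = n := by
  have hy0 : y 0 = a := y_zero μ y a hfix
  have hmemG : ∀ n, Good μ y 0 (rep n) ∧ (rep n).head? ≠ some 0 := by
    intro n
    obtain ⟨hsome, hhead⟩ := hrep.1 n
    refine ⟨?_, hhead⟩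
    apply good_of_deltaW μ y a hfix
    rw [hy0]
    exact hsome
  have hmono : StrictMono (fun n => posF μ y 0 (rep n)) := by
    intro m n hmn
    exact mono_full μ y a hprol hfix (rep m) (rep n) (hmemG m).1 (hmemG m).2
      (hmemG n).1 (hmemG n).2 (hrep.2.2 m n hmn)
  have hsurj : ∀ n, ∃ m, posF μ y 0 (rep m) = n := by
    intro n
    obtain ⟨k, hk⟩ := hfix.2 n
    obtain ⟨w, hgw, hhw, hpw⟩ := surj_aux μ y a hprol hfix k n hk
    have hwmem : w ∈ directive μ a := by
      constructor
      · have := deltaW_eq_y μ y a hfix w 0 hgw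
        rw [hy0] at this
        rw [this]
        rfl
      · exact hhw
    obtain ⟨m, hm⟩ := hrep.2.1 w hwmem
    exact ⟨m, by rw [hm, hpw]⟩
  intro n
  induction n using Nat.strong_induction_on with
  | _ n ih =>
      obtain ⟨m, hm⟩ := hsurj n
      rcases lt_trichotomy m n with h | h | h
      · have := ih m h
        omega
      · subst h; exact hm
      · exfalso
        have h1 : posF μ y 0 (rep n) < posF μ y 0 (rep m) := hmono h
        have h2 : n ≤ posF μ y 0 (rep n) := hmono.le_apply
        omega

end Stmt4Aux

lemma bridge {σ : Type*} [Inhabited σ] (μ : σ → List σ) :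
    ∀ (w : List ℕ) (b c : σ), deltaW μ b w = some c → ∀ (h : w ≠ []),
      (w.dropLast.foldl (fun z i => μ (z.getD i default)) (μ b)).getD (w.getLast h) default
        = c := by
  intro w
  induction w with
  | nil => intro b c _ h; exact absurd rfl h
  | cons i s ih =>
      intro b c hd h
      rw [Stmt4Aux.deltaW_cons] at hd
      rcases hs : (μ b)[i]? with _ | b'
      · rw [hs] at hd; simp at hd
      · rw [hs, Option.bind_some] at hd
        have hb' : (μ b).getD i default = b' := by
          rw [List.getD_eq_getElem?_getD, hs]
          rfl
        rcases eq_or_ne s [] with rfl | hsnil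
        · rw [Stmt4Aux.deltaW_nil] at hd
          obtain rfl := Option.some.inj hd
          simpa using hb'
        · rw [List.dropLast_cons_of_ne_nil hsnil, List.getLast_cons hsnil, List.foldl_cons, hb']
          exact ih b' c hd hsnil


/-- Lemma `cor:dir`. Let `n ≥ 1` and write `rep_S(n) = w₀w₁⋯w_ℓ`.
Defining `z₀ := μ(a)` and `z_{j+1} := μ((z_j)_{w_j})` for `j = 0,…,ℓ−1` (here realized
by folding over `w₀⋯w_{ℓ−1}`, i.e. over `(rep_S(n)).dropLast`), one has
`y_n = (z_ℓ)_{w_ℓ}`. -/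
theorem stmt_4 {σ : Type*} [Inhabited σ] (μ : σ → List σ) (a : σ) (y : ℕ → σ)
    (hprol : Prolongable μ a) (hfix : IsOmegaFixedPoint μ a y)
    (rep : ℕ → List ℕ) (hrep : IsANSEnum (directive μ a) rep) :
    ∀ n, 1 ≤ n → ∀ (hne : rep n ≠ []),
      y n = (((rep n).dropLast.foldl (fun z i => μ (z.getD i default)) (μ a)).getD
              ((rep n).getLast hne) default) := by
  intro n _ hne
  have hy0 : y 0 = a := Stmt4Aux.y_zero μ y a hfix
  obtain ⟨hsome, hhead⟩ := hrep.1 n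
  have hgood : Stmt4Aux.Good μ y 0 (rep n) := by
    apply Stmt4Aux.good_of_deltaW μ y a hfix
    rw [hy0]
    exact hsome
  have hpos : Stmt4Aux.posF μ y 0 (rep n) = n :=
    Stmt4Aux.enum_eq μ y a hprol hfix rep hrep n
  have hdelta : deltaW μ a (rep n) = some (y n) := by
    have h := Stmt4Aux.deltaW_eq_y μ y a hfix (rep n) 0 hgood
    rw [hy0, hpos] at h
    exact h
  exact (bridge μ (rep n) a (y n) hdelta hne).symm
end

section
/- Let μ : Σ → Σ* be a morphism prolongable on a ∈ Σ with infinite fixed point μ^ω(a), and let S be the abstract numeration system built on the directive language L_{μ,a} with the ordered alphabet ({0,…,r_μ−1}, 0<⋯<r_μ−1). Then for every s ≥ 1 and every n ≥ 0: |rep_S(n)| = s if and only if |μ^{s−1}(a)| ≤ n ≤ |μ^s(a)| − 1. In particular, rep_S(0) = ε, and if 0 < n < |μ(a)| then rep_S(n) is the single digit n. -/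
namespace S5Aux
variable {σ : Type*}

lemma am_nil (μ : σ → List σ) : applyMorphism μ [] = [] := rfl

lemma am_append (μ : σ → List σ) (u v : List σ) :
    applyMorphism μ (u ++ v) = applyMorphism μ u ++ applyMorphism μ v := by
  simp [applyMorphism]

lemma am_singleton (μ : σ → List σ) (b : σ) : applyMorphism μ [b] = μ b := by
  simp [applyMorphism]

lemma iter_nil (μ : σ → List σ) (s : ℕ) : (applyMorphism μ)^[s] [] = [] := by
  induction s with
  | zero => rfl
  | succ s ih => rw [Function.iterate_succ_apply, am_nil, ih]

lemma iter_append (μ : σ → List σ) (s : ℕ) (u v : List σ) :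
    (applyMorphism μ)^[s] (u ++ v) = (applyMorphism μ)^[s] u ++ (applyMorphism μ)^[s] v := by
  induction s generalizing u v with
  | zero => rfl
  | succ s ih => rw [Function.iterate_succ_apply, am_append, ih,
      Function.iterate_succ_apply, Function.iterate_succ_apply]

lemma iter_word (μ : σ → List σ) (s : ℕ) (w : List σ) :
    (applyMorphism μ)^[s] w = (w.map (fun c => (applyMorphism μ)^[s] [c])).flatten := by
  induction w with
  | nil => simp [iter_nil]
  | cons c t ih =>
    have : (c :: t) = [c] ++ t := rfl
    rw [this, iter_append, ih]; simp

lemma deltaW_nil (μ : σ → List σ) (b : σ) : deltaW μ b [] = some b := rfl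

lemma deltaW_cons (μ : σ → List σ) (b : σ) (i : ℕ) (w : List ℕ) :
    deltaW μ b (i :: w) = (μ b)[i]?.bind (fun c => deltaW μ c w) := by
  simp [deltaW, List.foldlM_cons]

lemma deltaW_append (μ : σ → List σ) (b : σ) (u v : List ℕ) :
    deltaW μ b (u ++ v) = (deltaW μ b u).bind (fun c => deltaW μ c v) := by
  simp [deltaW, List.foldlM_append]

def As (μ : σ → List σ) : ℕ → σ → List (List ℕ)
  | 0, _ => [[]]
  | s+1, b => ((μ b).zipIdx.map (fun p => (As μ s p.1).map (fun w => p.2 :: w))).flatten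

lemma length_As (μ : σ → List σ) : ∀ (s : ℕ) (b : σ),
    (As μ s b).length = ((applyMorphism μ)^[s] [b]).length
  | 0, b => rfl
  | s+1, b => by
    rw [As, Function.iterate_succ_apply]
    have h1 : applyMorphism μ [b] = μ b := by simp [applyMorphism]
    rw [h1, iter_word μ s (μ b)]
    rw [List.length_flatten, List.length_flatten, List.map_map, List.map_map]
    have : ((μ b).zipIdx.map (List.length ∘ fun p => (As μ s p.1).map (fun w => p.2 :: w)))
        = (μ b).zipIdx.map (fun p => ((applyMorphism μ)^[s] [p.1]).length) := by
      apply List.map_congr_left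
      intro p _
      simp [length_As μ s p.1]
    rw [this]
    have h2 : (μ b).zipIdx.map (fun p => ((applyMorphism μ)^[s] [p.1]).length)
        = (μ b).map (fun c => ((applyMorphism μ)^[s] [c]).length) := by
      have := List.zipIdx_map_fst 0 (μ b)
      calc (μ b).zipIdx.map (fun p => ((applyMorphism μ)^[s] [p.1]).length)
          = ((μ b).zipIdx.map Prod.fst).map (fun c => ((applyMorphism μ)^[s] [c]).length) := by
            rw [List.map_map]; rfl
        _ = _ := by rw [this]
    rw [h2]; rfl

lemma mem_As (μ : σ → List σ) : ∀ (s : ℕ) (b : σ) (w : List ℕ),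
    w ∈ As μ s b ↔ w.length = s ∧ (deltaW μ b w).isSome
  | 0, b, w => by
    constructor
    · rintro h
      simp [As] at h
      subst h
      exact ⟨rfl, rfl⟩
    · rintro ⟨h, _⟩
      rw [List.length_eq_zero_iff.mp h]; simp [As]
  | s+1, b, w => by
    rw [As]
    simp only [List.mem_flatten, List.mem_map]
    constructor
    · rintro ⟨l, ⟨p, hp, rfl⟩, hw⟩
      obtain ⟨u, hu, rfl⟩ := List.mem_map.mp hw
      rw [List.mem_zipIdx_iff_getElem?] at hp
      obtain ⟨hlen, hsome⟩ := (mem_As μ s p.1 u).mp hu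
      refine ⟨by simp [hlen], ?_⟩
      rw [deltaW_cons, hp]
      simpa using hsome
    · rintro ⟨hlen, hsome⟩
      cases w with
      | nil => simp at hlen
      | cons i u =>
        rw [deltaW_cons] at hsome
        obtain ⟨c, hc⟩ : ∃ c, (μ b)[i]? = some c := by
          cases h : (μ b)[i]? with
          | none => rw [h] at hsome; exact absurd hsome (by simp)
          | some c => exact ⟨c, rfl⟩
        rw [hc, Option.bind_some] at hsome
        refine ⟨(As μ s c).map (fun w => i :: w), ⟨(c, i), ?_, rfl⟩, ?_⟩
        · exact List.mem_zipIdx_iff_getElem?.mpr hc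
        · exact List.mem_map.mpr ⟨u, (mem_As μ s c u).mpr ⟨by simpa using hlen, hsome⟩, rfl⟩

lemma nodup_As (μ : σ → List σ) : ∀ (s : ℕ) (b : σ), (As μ s b).Nodup
  | 0, b => by simp [As]
  | s+1, b => by
    rw [As, List.nodup_flatten]
    constructor
    · rintro l hl
      obtain ⟨p, _, rfl⟩ := List.mem_map.mp hl
      exact (nodup_As μ s p.1).map (fun u v h => by injection h)
    · rw [List.pairwise_map]
      have hfst : (μ b).zipIdx.Pairwise (fun p q => p.2 ≠ q.2) := by
        have h1 : ((μ b).zipIdx.map Prod.snd).Nodup := by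
          rw [List.zipIdx_map_snd]; exact List.nodup_range'
        rw [List.Nodup, List.pairwise_map] at h1
        exact h1
      refine hfst.imp ?_
      intro p q hpq
      rw [List.disjoint_left]
      rintro w hw hw'
      obtain ⟨u, _, rfl⟩ := List.mem_map.mp hw
      obtain ⟨v, _, hv⟩ := List.mem_map.mp hw'
      injection hv.symm with h1 h2
      exact hpq h1

lemma lex_irrefl : ∀ u : List ℕ, ¬ List.Lex (· < ·) u u
  | [] => fun h => by cases h
  | (a :: t) => fun h => by
      cases h with
      | cons h => exact lex_irrefl t h
      | rel h => exact lt_irrefl a h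

lemma genlt_irrefl (u : List ℕ) : ¬ GenLtN u u := by
  rintro (h | ⟨_, h⟩)
  · exact lt_irrefl _ h
  · exact lex_irrefl u h

lemma genlt_length_le {u v : List ℕ} (h : GenLtN u v) : u.length ≤ v.length := by
  rcases h with h | ⟨h, _⟩
  · exact h.le
  · exact h.le

lemma not_lex_nil (u : List ℕ) : ¬ List.Lex (· < ·) u [] := by
  intro h; cases h

lemma lex_singleton {d n : ℕ} : List.Lex (· < ·) [d] [n] ↔ d < n := by
  constructor
  · intro h
    cases h with
    | cons h => cases h
    | rel h => exact h
  · intro h; exact List.Lex.rel h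

lemma ncard_list (l : List (List ℕ)) (h : l.Nodup) : {w | w ∈ l}.ncard = l.length := by
  have h1 : {w | w ∈ l} = ↑l.toFinset := by ext w; simp
  rw [h1, Set.ncard_coe_finset, List.toFinset_card_of_nodup h]

lemma rep_inj {L : Set (List ℕ)} {rep : ℕ → List ℕ} (hrep : IsANSEnum L rep) :
    Function.Injective rep := by
  intro m n h
  by_contra hne
  rcases Nat.lt_or_ge m n with hlt | hge
  · exact genlt_irrefl (rep m) (h ▸ hrep.2.2 m n hlt)
  · exact genlt_irrefl (rep n) (h ▸ hrep.2.2 n m (lt_of_le_of_ne hge (Ne.symm hne)))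

/-- The key lemma: a finite `GenLtN`-downward-closed subset `D` of `L` is enumerated
by the first `D.ncard` values of `rep`. -/
lemma key {L : Set (List ℕ)} {rep : ℕ → List ℕ} (hrep : IsANSEnum L rep)
    {D : Set (List ℕ)} (hDL : D ⊆ L) (hfin : D.Finite)
    (hdc : ∀ u ∈ L, ∀ v ∈ D, GenLtN u v → u ∈ D) (n : ℕ) :
    rep n ∈ D ↔ n < D.ncard := by
  set I : Set ℕ := rep ⁻¹' D with hI
  have hinj := rep_inj hrep
  have hIfin : I.Finite := hfin.preimage hinj.injOn
  have hdcI : ∀ {m n : ℕ}, m < n → n ∈ I → m ∈ I := by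
    intro m n hmn hn
    exact hdc (rep m) (hrep.1 m) (rep n) hn (hrep.2.2 m n hmn)
  have himg : rep '' I = D := by
    apply Set.Subset.antisymm
    · rintro w ⟨k, hk, rfl⟩; exact hk
    · intro w hw
      obtain ⟨k, hk⟩ := hrep.2.1 w (hDL hw)
      exact ⟨k, by rw [hI, Set.mem_preimage, hk]; exact hw, hk⟩
  have hcard : I.ncard = D.ncard := by
    rw [← himg, Set.ncard_image_of_injective _ hinj]
  rw [← hcard]
  constructor
  · intro hn
    have hsub : Set.Iic n ⊆ I := by
      intro m hm
      rcases lt_or_eq_of_le (Set.mem_Iic.mp hm) with h | h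
      · exact hdcI h hn
      · rwa [h]
    calc n < n + 1 := Nat.lt_succ_self n
      _ = (Set.Iic n).ncard := by
          rw [← Finset.coe_Iic, Set.ncard_coe_finset, Nat.card_Iic]
      _ ≤ I.ncard := Set.ncard_le_ncard hsub hIfin
  · intro hn
    by_contra hnotin
    have hsub : I ⊆ Set.Iio n := by
      intro m hm
      rcases Nat.lt_or_ge m n with h | h
      · exact h
      · rcases lt_or_eq_of_le h with h' | h'
        · exact absurd (hdcI h' hm) hnotin
        · exact absurd (h' ▸ hm) hnotin
    have : I.ncard ≤ n := by
      calc I.ncard ≤ (Set.Iio n).ncard := Set.ncard_le_ncard hsub (Set.finite_Iio n)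
        _ = n := by rw [← Finset.coe_Iio, Set.ncard_coe_finset, Nat.card_Iio]
    omega

lemma deltaW_replicate (μ : σ → List σ) (a : σ) (hprol : Prolongable μ a) (k : ℕ) :
    deltaW μ a (List.replicate k 0) = some a := by
  obtain ⟨u, hu⟩ := hprol
  induction k with
  | zero => rfl
  | succ k ih =>
    rw [List.replicate_succ, deltaW_cons]
    have : (μ a)[0]? = some a := by rw [hu]; simp
    rw [this, Option.bind_some, ih]

lemma pad_inj : ∀ (k k' : ℕ) (u v : List ℕ), u.head? ≠ some 0 → v.head? ≠ some 0 →
    List.replicate k 0 ++ u = List.replicate k' 0 ++ v → u = v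
  | 0, 0, u, v, _, _, h => by simpa using h
  | 0, k'+1, u, v, hu, _, h => by
    simp only [List.replicate_succ, List.replicate_zero, List.nil_append, List.cons_append] at h
    subst h
    exact absurd rfl hu
  | k+1, 0, u, v, _, hv, h => by
    simp only [List.replicate_succ, List.replicate_zero, List.nil_append, List.cons_append] at h
    rw [← h] at hv
    exact absurd rfl hv
  | k+1, k'+1, u, v, hu, hv, h => by
    simp only [List.replicate_succ, List.cons_append] at h
    exact pad_inj k k' u v hu hv (by injection h)

/-- The set of directive words of length at most `s`. -/
def Lset (μ : σ → List σ) (a : σ) (s : ℕ) : Set (List ℕ) :=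
  {w | w ∈ directive μ a ∧ w.length ≤ s}

def pad (s : ℕ) (w : List ℕ) : List ℕ := List.replicate (s - w.length) 0 ++ w

lemma pad_image (μ : σ → List σ) (a : σ) (hprol : Prolongable μ a) (s : ℕ) :
    pad s '' Lset μ a s = {w | w ∈ As μ s a} := by
  apply Set.Subset.antisymm
  · rintro v ⟨w, ⟨⟨hsome, _⟩, hlen⟩, rfl⟩
    rw [Set.mem_setOf_eq, mem_As]
    constructor
    · simp [pad, Nat.sub_add_cancel hlen]
    · rw [pad, deltaW_append, deltaW_replicate μ a hprol, Option.bind_some]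
      exact hsome
  · intro v hv
    rw [Set.mem_setOf_eq, mem_As] at hv
    obtain ⟨hlen, hsome⟩ := hv
    set w := v.dropWhile (fun i => i == 0) with hw
    set t := v.takeWhile (fun i => i == 0) with ht
    have htw : t ++ w = v := List.takeWhile_append_dropWhile
    have htr : t = List.replicate t.length 0 := by
      rw [List.eq_replicate_iff]
      refine ⟨rfl, fun b hb => ?_⟩
      have := List.mem_takeWhile_imp hb
      simpa using this
    have hwhead : w.head? ≠ some 0 := by
      have h0 := List.head?_dropWhile_not (fun i => i == 0) v
      rw [← hw] at h0
      intro hcon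
      rw [hcon] at h0
      simp at h0
    have hsome' : (deltaW μ a w).isSome := by
      rw [← htw, deltaW_append, htr, deltaW_replicate μ a hprol, Option.bind_some] at hsome
      exact hsome
    have hwlen : w.length ≤ s := by
      rw [← hlen, ← htw]
      simp
    refine ⟨w, ⟨⟨hsome', hwhead⟩, hwlen⟩, ?_⟩
    have hk : s - w.length = t.length := by
      have : t.length + w.length = s := by rw [← hlen, ← htw]; simp
      omega
    rw [pad, hk, ← htr, htw]

lemma pad_injOn (μ : σ → List σ) (a : σ) (s : ℕ) : Set.InjOn (pad s) (Lset μ a s) := by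
  rintro u ⟨⟨_, hu⟩, _⟩ v ⟨⟨_, hv⟩, _⟩ h
  exact pad_inj _ _ u v hu hv h

lemma Lset_finite (μ : σ → List σ) (a : σ) (hprol : Prolongable μ a) (s : ℕ) :
    (Lset μ a s).Finite :=
  Set.Finite.of_finite_image (by rw [pad_image μ a hprol s]; exact (As μ s a).finite_toSet)
    (pad_injOn μ a s)

lemma Lset_ncard (μ : σ → List σ) (a : σ) (hprol : Prolongable μ a) (s : ℕ) :
    (Lset μ a s).ncard = (morphIter μ a s).length := by
  rw [← Set.ncard_image_of_injOn (pad_injOn μ a s), pad_image μ a hprol s,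
    ncard_list _ (nodup_As μ s a), length_As]
  rfl

lemma one_le_morphIter (μ : σ → List σ) (a : σ) (hprol : Prolongable μ a) (s : ℕ) :
    1 ≤ (morphIter μ a s).length := by
  obtain ⟨u, hu⟩ := hprol
  induction s with
  | zero => simp [morphIter]
  | succ s ih =>
    have h1 : morphIter μ a (s+1) = (applyMorphism μ)^[s] (μ a) := by
      rw [morphIter, Function.iterate_succ_apply, am_singleton]
    have h2 : μ a = [a] ++ u := by rw [hu]; rfl
    rw [h1, h2, iter_append]
    calc 1 ≤ (morphIter μ a s).length := ih
      _ ≤ _ := by rw [List.length_append]; exact Nat.le_add_right _ _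
  
lemma Lset_dc (μ : σ → List σ) (a : σ) (s : ℕ) :
    ∀ u ∈ directive μ a, ∀ v ∈ Lset μ a s, GenLtN u v → u ∈ Lset μ a s := by
  rintro u hu v ⟨_, hv⟩ hlt
  exact ⟨hu, le_trans (genlt_length_le hlt) hv⟩

lemma rep_len_le (μ : σ → List σ) (a : σ) (hprol : Prolongable μ a)
    {rep : ℕ → List ℕ} (hrep : IsANSEnum (directive μ a) rep) (s n : ℕ) :
    (rep n).length ≤ s ↔ n < (morphIter μ a s).length := by
  have h := key hrep (D := Lset μ a s) (fun w hw => hw.1) (Lset_finite μ a hprol s)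
    (Lset_dc μ a s) n
  rw [Lset_ncard μ a hprol s] at h
  rw [← h]
  constructor
  · intro hl; exact ⟨hrep.1 n, hl⟩
  · rintro ⟨_, hl⟩; exact hl

-- the small sets for the last part
def Dlist (n : ℕ) : List (List ℕ) := ([] : List ℕ) :: (List.range' 1 n).map (fun d => [d])

lemma mem_Dlist {n : ℕ} {w : List ℕ} :
    w ∈ Dlist n ↔ w = [] ∨ ∃ d, 1 ≤ d ∧ d ≤ n ∧ w = [d] := by
  simp only [Dlist, List.mem_cons, List.mem_map, List.mem_range'_1]
  constructor
  · rintro (rfl | ⟨d, ⟨h1, h2⟩, rfl⟩)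
    · exact Or.inl rfl
    · exact Or.inr ⟨d, h1, by omega, rfl⟩
  · rintro (rfl | ⟨d, h1, h2, rfl⟩)
    · exact Or.inl rfl
    · exact Or.inr ⟨d, ⟨h1, by omega⟩, rfl⟩

lemma nodup_Dlist (n : ℕ) : (Dlist n).Nodup := by
  rw [Dlist, List.nodup_cons]
  constructor
  · simp
  · exact (List.nodup_range' (s := 1) (n := n)).map (fun x y h => by injection h)

lemma length_Dlist (n : ℕ) : (Dlist n).length = n + 1 := by
  simp [Dlist]

lemma Dlist_subset (μ : σ → List σ) (a : σ) {n : ℕ} (hn : n < (μ a).length) :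
    {w | w ∈ Dlist n} ⊆ directive μ a := by
  intro w hw
  rcases mem_Dlist.mp hw with rfl | ⟨d, h1, h2, rfl⟩
  · exact ⟨rfl, by simp⟩
  · constructor
    · rw [deltaW_cons, List.getElem?_eq_getElem (by omega)]
      rfl
    · simp; omega

lemma Dlist_dc (μ : σ → List σ) (a : σ) (n : ℕ) :
    ∀ u ∈ directive μ a, ∀ v ∈ {w | w ∈ Dlist n}, GenLtN u v → u ∈ {w | w ∈ Dlist n} := by
  rintro u hu v hv hlt
  rcases mem_Dlist.mp hv with rfl | ⟨d, h1, h2, rfl⟩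
  · rcases hlt with h | ⟨h, hlex⟩
    · simp at h
    · rw [Set.mem_setOf_eq, mem_Dlist]
      exact Or.inl (List.length_eq_zero_iff.mp (by simpa using h))
  · rcases hlt with h | ⟨h, hlex⟩
    · have h0 : u.length = 0 := by
        simp only [List.length_singleton, Nat.lt_one_iff] at h
        exact h
      rw [Set.mem_setOf_eq, mem_Dlist]
      exact Or.inl (List.length_eq_zero_iff.mp h0)
    · simp only [List.length_singleton] at h
      obtain ⟨e, rfl⟩ := List.length_eq_one_iff.mp h
      rw [lex_singleton] at hlex
      have he : e ≠ 0 := by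
        intro hcon
        exact hu.2 (by rw [hcon]; rfl)
      rw [Set.mem_setOf_eq, mem_Dlist]
      exact Or.inr ⟨e, by omega, by omega, rfl⟩

end S5Aux

open S5Aux in
/-- condition `(ssi)`. For every `s ≥ 1` and every `n ≥ 0`,
`|rep_S(n)| = s` iff `|μ^{s−1}(a)| ≤ n ≤ |μ^s(a)| − 1`. In particular `rep_S(0) = ε`
and, for `0 < n < |μ(a)|`, `rep_S(n)` is the single digit `n`. -/
theorem stmt_5 {σ : Type*} (μ : σ → List σ) (a : σ) (y : ℕ → σ)
    (hprol : Prolongable μ a) (hfix : IsOmegaFixedPoint μ a y)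
    (rep : ℕ → List ℕ) (hrep : IsANSEnum (directive μ a) rep) :
    (∀ s, 1 ≤ s → ∀ n,
      ((rep n).length = s ↔
        (morphIter μ a (s - 1)).length ≤ n ∧ n ≤ (morphIter μ a s).length - 1)) ∧
    rep 0 = [] ∧
    (∀ n, 0 < n → n < (μ a).length → rep n = [n]) := by
  refine ⟨?_, ?_, ?_⟩
  · intro s hs n
    have h1 := rep_len_le μ a hprol hrep s n
    have h2 := rep_len_le μ a hprol hrep (s-1) n
    have h3 := one_le_morphIter μ a hprol s
    constructor
    · intro h
      have hub : n < (morphIter μ a s).length := h1.mp (by omega)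
      have hlb : ¬ n < (morphIter μ a (s-1)).length := by
        intro hc
        have := h2.mpr hc
        omega
      omega
    · intro ⟨ha, hb⟩
      have hub : (rep n).length ≤ s := h1.mpr (by omega)
      have hlb : ¬ ((rep n).length ≤ s - 1) := fun hc => by
        have := h2.mp hc; omega
      omega
  · have hD : ({[]} : Set (List ℕ)) ⊆ directive μ a := by
      rintro w rfl
      exact ⟨rfl, by simp⟩
    have hdc : ∀ u ∈ directive μ a, ∀ v ∈ ({[]} : Set (List ℕ)), GenLtN u v → u ∈ ({[]} : Set (List ℕ)) := by
      rintro u hu v rfl hlt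
      rcases hlt with h | ⟨h, _⟩
      · simp at h
      · exact List.length_eq_zero_iff.mp (by simpa using h)
    have h := key hrep hD (Set.finite_singleton _) hdc 0
    rw [Set.ncard_singleton] at h
    exact h.mpr (by omega)
  · intro n hn hna
    have hcard : ∀ m, m < (μ a).length → {w | w ∈ Dlist m}.ncard = m + 1 := by
      intro m _
      rw [ncard_list _ (nodup_Dlist m), length_Dlist]
    have hmem : rep n ∈ {w | w ∈ Dlist n} := by
      rw [key hrep (Dlist_subset μ a hna) (List.finite_toSet _) (Dlist_dc μ a n) n,
        hcard n hna]
      omega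
    have hnmem : rep n ∉ {w | w ∈ Dlist (n-1)} := by
      rw [key hrep (Dlist_subset μ a (by omega)) (List.finite_toSet _) (Dlist_dc μ a (n-1)) n,
        hcard (n-1) (by omega)]
      omega
    rcases mem_Dlist.mp hmem with h | ⟨d, h1, h2, h⟩
    · exact absurd (show rep n ∈ Dlist (n-1) from mem_Dlist.mpr (Or.inl h)) hnmem
    · rcases Nat.lt_or_ge d n with hd | hd
      · exact absurd (show rep n ∈ Dlist (n-1) from
          mem_Dlist.mpr (Or.inr ⟨d, h1, by omega, h⟩)) hnmem
      · have : d = n := by omega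
        rw [h, this]
end

section
/- Let λ : Σ₁ → Σ₁* be a morphism prolongable on a with infinite fixed point x = λ^ω(a), and let μ : Σ₂ → Σ₂* be a morphism prolongable on b with infinite fixed point y = μ^ω(b). Then the directive languages L_{λ,a} and L_{μ,b} are equal if and only if Shape_λ(x) = Shape_μ(y), where Shape_λ(x) is the sequence (|λ(x_k)|)_{k≥0} and Shape_μ(y) is the sequence (|μ(y_k)|)_{k≥0}. -/
namespace Stmt7Aux

/-- partial sums of a shape sequence -/
def Ssum (s : ℕ → ℕ) (m : ℕ) : ℕ := ((List.range m).map s).sum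

/-- abstract run of the shape automaton -/
def run (s : ℕ → ℕ) : ℕ → List ℕ → Option ℕ
  | m, [] => some m
  | m, i :: w => if i < s m then run s (Ssum s m + i) w else none

lemma Ssum_zero (s : ℕ → ℕ) : Ssum s 0 = 0 := rfl

lemma Ssum_succ (s : ℕ → ℕ) (m : ℕ) : Ssum s (m+1) = Ssum s m + s m := by
  simp [Ssum, List.range_succ]

lemma Ssum_mono (s : ℕ → ℕ) {m n : ℕ} (h : m ≤ n) : Ssum s m ≤ Ssum s n := by
  induction n with
  | zero => simp [Nat.le_zero.mp h]
  | succ n ih =>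
    rcases Nat.lt_or_ge m (n+1) with h' | h'
    · have := ih (by omega)
      rw [Ssum_succ]; omega
    · have hmn : m = n + 1 := by omega
      rw [hmn]

lemma Ssum_congr {s₁ s₂ : ℕ → ℕ} {m : ℕ} (h : ∀ n < m, s₁ n = s₂ n) :
    Ssum s₁ m = Ssum s₂ m := by
  induction m with
  | zero => rfl
  | succ m ih =>
    rw [Ssum_succ, Ssum_succ, ih (fun n hn => h n (by omega)), h m (by omega)]

lemma run_nil (s : ℕ → ℕ) (m : ℕ) : run s m [] = some m := rfl

lemma run_cons (s : ℕ → ℕ) (m i : ℕ) (w : List ℕ) :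
    run s m (i :: w) = if i < s m then run s (Ssum s m + i) w else none := rfl

lemma run_snoc (s : ℕ → ℕ) (w : List ℕ) : ∀ (m i : ℕ),
    run s m (w ++ [i]) =
      (run s m w).bind (fun p => if i < s p then some (Ssum s p + i) else none) := by
  induction w with
  | nil => intro m i; simp [run_nil, run_cons]
  | cons j w ih =>
    intro m i
    rw [List.cons_append, run_cons, run_cons]
    split
    · exact ih _ i
    · rfl

/-- every index reached by a length-`j` run from 0 is `< T j` where `T` iterates `Ssum`. -/
lemma run_lt (s : ℕ → ℕ) (T : ℕ → ℕ) (hT0 : T 0 = 1) (hTs : ∀ j, T (j+1) = Ssum s (T j)) :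
    ∀ (j : ℕ) (w : List ℕ), w.length = j → ∀ n, run s 0 w = some n → n < T j := by
  intro j
  induction j with
  | zero =>
    intro w hw n hn
    rw [List.length_eq_zero_iff] at hw
    subst hw
    rw [run_nil] at hn
    injection hn with hn
    rw [hT0]; omega
  | succ j ih =>
    intro w hw n hn
    rcases List.eq_nil_or_concat w with rfl | ⟨u, i, rfl⟩
    · exact absurd hw (by simp)
    · rw [List.concat_eq_append] at hn
      rw [run_snoc] at hn
      rcases hu : run s 0 u with _ | m
      · rw [hu] at hn; simp at hn
      · rw [hu] at hn
        simp only [Option.bind_some] at hn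
        split at hn
        · rename_i hi
          have hm : m < T j := ih u (by simpa [List.concat_eq_append] using hw) m hu
          have hn' : Ssum s m + i = n := by injection hn
          have h1 : n < Ssum s (m+1) := by rw [Ssum_succ]; omega
          have h2 : Ssum s (m+1) ≤ Ssum s (T j) := Ssum_mono s (by omega)
          rw [hTs]; omega
        · simp at hn

lemma exists_block (s : ℕ → ℕ) : ∀ (M n : ℕ), n < Ssum s M →
    ∃ m, m < M ∧ Ssum s m ≤ n ∧ n < Ssum s m + s m := by
  intro M
  induction M with
  | zero => intro n hn; rw [Ssum_zero] at hn; omega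
  | succ M ih =>
    intro n hn
    rw [Ssum_succ] at hn
    rcases Nat.lt_or_ge n (Ssum s M) with h | h
    · obtain ⟨m, h1, h2, h3⟩ := ih n h
      exact ⟨m, by omega, h2, h3⟩
    · exact ⟨M, by omega, h, hn⟩

lemma run_surj (s : ℕ → ℕ) (T : ℕ → ℕ) (hT0 : T 0 = 1) (hTs : ∀ j, T (j+1) = Ssum s (T j)) :
    ∀ (j n : ℕ), n < T j → ∃ w : List ℕ, w.length = j ∧ run s 0 w = some n := by
  intro j
  induction j with
  | zero =>
    intro n hn
    rw [hT0] at hn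
    have : n = 0 := by omega
    subst this
    exact ⟨[], rfl, rfl⟩
  | succ j ih =>
    intro n hn
    rw [hTs] at hn
    obtain ⟨m, hm, h1, h2⟩ := exists_block s (T j) n hn
    obtain ⟨w, hw, hrun⟩ := ih m hm
    refine ⟨w ++ [n - Ssum s m], by simp [hw], ?_⟩
    rw [run_snoc, hrun]
    simp only [Option.bind_some]
    rw [if_pos (by omega)]
    congr 1
    omega

/-- the core combinatorial lemma -/
lemma key (s₁ s₂ : ℕ → ℕ)
    (hV : ∀ w : List ℕ, (run s₁ 0 w).isSome ↔ (run s₂ 0 w).isSome)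
    (T : ℕ → ℕ) (hT0 : T 0 = 1) (hTs : ∀ j, T (j+1) = Ssum s₁ (T j))
    (hUnb : ∀ N, ∃ j, N < T j) : ∀ k, s₁ k = s₂ k := by
  -- extension counting
  have hcount : ∀ (w : List ℕ) (n : ℕ), run s₁ 0 w = some n → run s₂ 0 w = some n →
      s₁ n = s₂ n := by
    intro w n h1 h2
    have hiff : ∀ i, i < s₁ n ↔ i < s₂ n := by
      intro i
      have e1 : run s₁ 0 (w ++ [i]) =
          (if i < s₁ n then some (Ssum s₁ n + i) else none) := by
        rw [run_snoc, h1]; rfl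
      have e2 : run s₂ 0 (w ++ [i]) =
          (if i < s₂ n then some (Ssum s₂ n + i) else none) := by
        rw [run_snoc, h2]; rfl
      have := hV (w ++ [i])
      rw [e1, e2] at this
      constructor
      · intro h; by_contra hc
        rw [if_pos h, if_neg hc] at this; simp at this
      · intro h; by_contra hc
        rw [if_neg hc, if_pos h] at this; simp at this
    have := hiff (s₁ n); have := hiff (s₂ n); omega
  have main : ∀ j, (∀ w : List ℕ, w.length = j → run s₁ 0 w = run s₂ 0 w) ∧
      (∀ n < T j, s₁ n = s₂ n) := by
    intro j
    induction j with
    | zero =>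
      constructor
      · intro w hw; rw [List.length_eq_zero_iff] at hw; subst hw; rfl
      · intro n hn
        rw [hT0] at hn
        have hn0 : n = 0 := by omega
        subst hn0
        exact hcount [] 0 rfl rfl
    | succ j ih =>
      have hrun : ∀ w : List ℕ, w.length = j + 1 → run s₁ 0 w = run s₂ 0 w := by
        intro w hw
        rcases List.eq_nil_or_concat w with rfl | ⟨u, i, rfl⟩
        · exact absurd hw (by simp)
        · rw [List.concat_eq_append] at hw ⊢
          have hu : u.length = j := by simpa using hw
          rw [run_snoc, run_snoc, ← ih.1 u hu]
          rcases h : run s₁ 0 u with _ | m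
          · rfl
          · have hm : m < T j := run_lt s₁ T hT0 hTs j u hu m h
            have hsm : s₁ m = s₂ m := ih.2 m hm
            have hSm : Ssum s₁ m = Ssum s₂ m :=
              Ssum_congr (fun n hn => ih.2 n (by omega))
            simp only [Option.bind_some, hsm, hSm]
      refine ⟨hrun, ?_⟩
      intro n hn
      obtain ⟨w, hw, h1⟩ := run_surj s₁ T hT0 hTs (j+1) n hn
      exact hcount w n h1 (by rw [← hrun w hw]; exact h1)
  intro k
  obtain ⟨j, hj⟩ := hUnb k
  exact (main j).2 k hj

section Morphism

variable {σ : Type*} (μ : σ → List σ) (b : σ) (y : ℕ → σ)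

/-- the shape sequence -/
def shape (k : ℕ) : ℕ := (μ (y k)).length

lemma isSome_lt {α : Type*} (l : List α) (n : ℕ) (h : (l[n]?).isSome) : n < l.length := by
  by_contra hc
  rw [List.getElem?_eq_none (by omega)] at h
  simp at h

variable (hfix : IsOmegaFixedPoint μ b y)

include hfix

lemma y_zero : y 0 = b := by
  have h := hfix.1 0 0 (by simp [morphIter])
  simp [morphIter] at h
  exact h.symm

lemma iter_eq_map_range (k : ℕ) :
    morphIter μ b k = (List.range (morphIter μ b k).length).map y := by
  apply List.ext_getElem?
  intro n
  rcases Nat.lt_or_ge n (morphIter μ b k).length with h | h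
  · rw [hfix.1 k n h]
    simp [h]
  · rw [List.getElem?_eq_none h, List.getElem?_eq_none (by simpa using h)]

omit hfix in
/-- flatten indexing lemma -/
lemma flat_index : ∀ (l : List σ) (m : ℕ) (hm : m < l.length),
    ∀ i, i < (μ (l[m]'hm)).length →
    (applyMorphism μ l)[(((l.take m).map (fun c => (μ c).length)).sum + i)]? =
      (μ (l[m]'hm))[i]? := by
  intro l
  induction l with
  | nil => intro m hm; simp at hm
  | cons c t ih =>
    intro m hm i hi
    have happ : applyMorphism μ (c :: t) = μ c ++ applyMorphism μ t := by
      simp [applyMorphism]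
    cases m with
    | zero =>
      simp only [List.take_zero, List.map_nil, List.sum_nil, Nat.zero_add]
      rw [happ, List.getElem?_append, if_pos (by simpa using hi)]
      simp
    | succ m =>
      have hm' : m < t.length := by simpa using hm
      have hi' : i < (μ (t[m]'hm')).length := by simpa using hi
      have hkey := ih m hm' i hi'
      simp only [List.take_succ_cons, List.map_cons, List.sum_cons]
      rw [happ, List.getElem?_append, if_neg (by omega)]
      have hidx : (μ c).length + (((t.take m).map (fun c => (μ c).length)).sum) + i - (μ c).length
          = ((t.take m).map (fun c => (μ c).length)).sum + i := by omega
      rw [Nat.add_assoc] at hidx ⊢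
      rw [hidx]
      simpa using hkey

/-- the block lemma: applying μ at position m lands at Ssum (shape) m. -/
lemma block (m i : ℕ) (hi : i < (μ (y m)).length) :
    (μ (y m))[i]? = some (y (Ssum (shape μ y) m + i)) := by
  obtain ⟨k, hk⟩ := hfix.2 m
  have hlm : (morphIter μ b k)[m]'hk = y m := by
    have := hfix.1 k m hk
    rw [List.getElem?_eq_getElem hk] at this
    exact Option.some_injective _ this
  have hsum : (((morphIter μ b k).take m).map (fun c => (μ c).length)).sum
      = Ssum (shape μ y) m := by
    conv_lhs => rw [iter_eq_map_range μ b y hfix k]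
    rw [← List.map_take, List.take_range, min_eq_left (by omega), List.map_map]
    rfl
  have hiter : morphIter μ b (k+1) = applyMorphism μ (morphIter μ b k) := by
    rw [morphIter, morphIter, Function.iterate_succ_apply']
  have hidx := flat_index μ (morphIter μ b k) m hk i (by rw [hlm]; exact hi)
  rw [hsum, hlm] at hidx
  have hsome : ((applyMorphism μ (morphIter μ b k))[Ssum (shape μ y) m + i]?).isSome := by
    rw [hidx, List.getElem?_eq_getElem hi]; rfl
  have hlen := isSome_lt _ _ hsome
  have := hfix.1 (k+1) (Ssum (shape μ y) m + i) (by rw [hiter]; exact hlen)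
  rw [hiter] at this
  rw [← hidx, this]

/-- the bridge: `deltaW` is `run` of the shape, transported along `y`. -/
lemma deltaW_eq_run : ∀ (w : List ℕ) (m : ℕ),
    deltaW μ (y m) w = (run (shape μ y) m w).map y := by
  intro w
  induction w with
  | nil => intro m; rfl
  | cons i w ih =>
    intro m
    rw [deltaW, List.foldlM_cons, run_cons]
    by_cases h : i < shape μ y m
    · rw [if_pos h, block μ b y hfix m i h]
      exact ih _
    · rw [if_neg h, List.getElem?_eq_none (Nat.not_lt.mp h)]
      rfl

lemma directive_eq_run :
    directive μ b = {w | (run (shape μ y) 0 w).isSome = true ∧ w.head? ≠ some 0} := by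
  ext w
  simp only [directive, Set.mem_setOf_eq]
  constructor <;> intro ⟨h1, h2⟩ <;> refine ⟨?_, h2⟩
  · rw [← y_zero μ b y hfix, deltaW_eq_run μ b y hfix] at h1
    simpa using h1
  · rw [← y_zero μ b y hfix, deltaW_eq_run μ b y hfix]
    simpa using h1

lemma T_spec :
    (morphIter μ b 0).length = 1 ∧
    ∀ j, (morphIter μ b (j+1)).length = Ssum (shape μ y) ((morphIter μ b j).length) := by
  constructor
  · simp [morphIter]
  · intro j
    have hiter : morphIter μ b (j+1) = applyMorphism μ (morphIter μ b j) := by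
      rw [morphIter, morphIter, Function.iterate_succ_apply']
    rw [hiter, applyMorphism, List.length_flatten, List.map_map]
    conv_lhs => rw [iter_eq_map_range μ b y hfix j]
    rw [List.map_map]
    rfl

end Morphism

end Stmt7Aux



open Stmt7Aux in
/-- Lemma `lem:shape`. Let `x = λ^ω(a)` and `y = μ^ω(b)` be infinite
fixed points of morphisms `λ` and `μ`. Then the directive languages `L_{λ,a}` and
`L_{μ,b}` are equal iff `Shape_λ(x) = Shape_μ(y)`, i.e. iff `|λ(x_k)| = |μ(y_k)|`
for all `k ≥ 0`. -/
theorem stmt_7 {σ₁ σ₂ : Type*} (lam : σ₁ → List σ₁) (a : σ₁) (x : ℕ → σ₁)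
    (mu : σ₂ → List σ₂) (b : σ₂) (y : ℕ → σ₂)
    (hprol₁ : Prolongable lam a) (hfix₁ : IsOmegaFixedPoint lam a x)
    (hprol₂ : Prolongable mu b) (hfix₂ : IsOmegaFixedPoint mu b y) :
    directive lam a = directive mu b ↔ ∀ k, (lam (x k)).length = (mu (y k)).length := by
  have hD₁ := directive_eq_run lam a x hfix₁
  have hD₂ := directive_eq_run mu b y hfix₂
  have hpos₁ : 0 < shape lam x 0 := by
    obtain ⟨u, hu⟩ := hprol₁
    rw [shape, y_zero lam a x hfix₁, hu]
    simp
  have hpos₂ : 0 < shape mu y 0 := by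
    obtain ⟨u, hu⟩ := hprol₂
    rw [shape, y_zero mu b y hfix₂, hu]
    simp
  constructor
  · intro hdir
    rw [hD₁, hD₂] at hdir
    have hzero : ∀ (s : ℕ → ℕ), 0 < s 0 → ∀ v : List ℕ, run s 0 (0 :: v) = run s 0 v := by
      intro s hs v
      rw [run_cons, if_pos hs, Ssum_zero]
    have hV : ∀ w : List ℕ,
        (run (shape lam x) 0 w).isSome ↔ (run (shape mu y) 0 w).isSome := by
      intro w
      induction w with
      | nil => simp [run_nil]
      | cons i v ih =>
        rcases Nat.eq_zero_or_pos i with rfl | hi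
        · rw [hzero _ hpos₁ v, hzero _ hpos₂ v]; exact ih
        · have hh : (i :: v).head? ≠ some 0 := by simp; omega
          constructor
          · intro h
            have hmem : (i :: v) ∈
                {w : List ℕ | (run (shape lam x) 0 w).isSome = true ∧ w.head? ≠ some 0} :=
              ⟨h, hh⟩
            rw [hdir] at hmem
            exact hmem.1
          · intro h
            have hmem : (i :: v) ∈
                {w : List ℕ | (run (shape mu y) 0 w).isSome = true ∧ w.head? ≠ some 0} :=
              ⟨h, hh⟩
            rw [← hdir] at hmem
            exact hmem.1
    obtain ⟨hT0, hTs⟩ := T_spec lam a x hfix₁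
    exact key (shape lam x) (shape mu y) hV (fun j => (morphIter lam a j).length) hT0 hTs
      hfix₁.2
  · intro h
    have hss : shape lam x = shape mu y := funext h
    rw [hD₁, hD₂, hss]
end

section
/- Let x : ℕ×ℕ → Γ be S-automatic for an abstract numeration system S=(L,Σ,<) with ε ∈ L, generated by a DFAO 𝒜=(Q_𝒜,q₀,(Σ∪{#})²,δ_𝒜,Γ,τ_𝒜) with δ_𝒜(q,(#,#))=q, and let 𝒫 be the product automaton with canonical 2-dimensional morphism μ_𝒫 and fixed point w = μ_𝒫^ω(p₀). Then the second component of w(m,n) depends only on m, the third component depends only on n, and for every (m,n) with w(m,n) ∉ F, either the second component of w(m,0) does not belong to F_ℒ (so that w(m,n') ∉ F for all n' ≥ 0) or the third component of w(0,n) does not belong to F_ℒ (so that w(m',n) ∉ F for all m' ≥ 0); i.e., the word obtained from w by replacing every letter not in F by a new symbol e is e-erasable. -/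
/-- Genealogical (radix, shortlex) order on words over an ordered alphabet. -/
def GenLt {Δ : Type*} [LT Δ] (u v : List Δ) : Prop :=
  u.length < v.length ∨ (u.length = v.length ∧ List.Lex (· < ·) u v)

/-- `(u,v)^#`: pad the shorter of `u, v` on the left with the padding symbol `#`
(modelled by `none`) so that both have equal length, and read the resulting pair as a
single word over the alphabet `(Σ ∪ {#})²`. -/
def padHash {Δ : Type*} (u v : List Δ) : List (Option Δ × Option Δ) :=
  List.zip (List.replicate (max u.length v.length - u.length) none ++ u.map some)
           (List.replicate (max u.length v.length - v.length) none ++ v.map some)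

/-- The enumeration `a₀ = #, a₁, …, a_r` of the padded alphabet `Σ ∪ {#}`, where the
alphabet `Σ` is `Fin r` with its natural order: `letter r 0 = #` and
`letter r i = a_i = i - 1` for `1 ≤ i ≤ r`. -/
def letter (r i : ℕ) : Option (Fin r) :=
  if h : 0 < i ∧ i - 1 < r then some ⟨i - 1, h.2⟩ else none

/-- The transition function of the product automaton `𝒫`, imitating the behaviour of
the DFAO `𝒜` (via `stepA`) and of two copies of the DFA `ℒ` (via `stepL`), one for
each dimension. -/
def productStep {QA QL Δ : Type*} (stepA : QA → Option Δ × Option Δ → QA)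
    (stepL : QL → Option Δ → QL) (p : QA × QL × QL) (ab : Option Δ × Option Δ) :
    QA × QL × QL :=
  (stepA p.1 ab, stepL p.2.1 ab.1, stepL p.2.2 ab.2)

/-- Let `x` be `S`-automatic for `S = (L, Σ, <)` with `ε ∈ L`
(alphabet `Σ = Fin r`, padding symbol `# = none`, `a₀ = # < a₁ < ⋯ < a_r`), generated
by a DFAO `𝒜` with `δ_𝒜(q,(#,#)) = q`.  Let `ℒ` be a DFA accepting `{#}*L` with
`δ_ℒ(ℓ₀,#) = ℓ₀`, let `𝒫` be the product automaton with states `Q_𝒜 × Q_ℒ × Q_ℒ`,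
initial state `p₀ = (q₀,ℓ₀,ℓ₀)` and final states `F = Q_𝒜 × F_ℒ × F_ℒ`, and let
`w = μ_𝒫^ω(p₀)` be the fixed point of the canonical 2-dimensional morphism `μ_𝒫`
(a uniform morphism of square size `r+1`, so `w((r+1)m+i,(r+1)n+j) = δ(w(m,n),(aᵢ,aⱼ))`).
Then the second component of `w(m,n)` depends only on `m`, the third component depends
only on `n`, and `λ(w)` (replace letters outside `F` by `e`) is `e`-erasable: whenever
`w(m,n) ∉ F`, either the second component of `w(m,0)` is not in `F_ℒ` and the whole
column `w(m,·)` avoids `F`, or the third component of `w(0,n)` is not in `F_ℒ` and the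
whole row `w(·,n)` avoids `F`. -/
theorem stmt_14 {Γ QA QL : Type*} [Fintype QA] [Fintype QL]
    (r : ℕ) (hr : 1 ≤ r)
    (stepA : QA → Option (Fin r) × Option (Fin r) → QA) (q₀ : QA) (τ : QA → Γ)
    (hA : ∀ q, stepA q (none, none) = q)
    (stepL : QL → Option (Fin r) → QL) (ℓ₀ : QL) (FL : Set QL)
    (hL0 : stepL ℓ₀ none = ℓ₀)
    (L : Set (List (Fin r)))
    (hacc : ∀ v : List (Option (Fin r)),
      v.foldl stepL ℓ₀ ∈ FL ↔
        ∃ (k : ℕ) (u : List (Fin r)), u ∈ L ∧ v = List.replicate k none ++ u.map some)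
    (hε : ([] : List (Fin r)) ∈ L)
    (rep : ℕ → List (Fin r))
    (hmem : ∀ n, rep n ∈ L) (hsurj : ∀ u ∈ L, ∃ n, rep n = u)
    (hmono : ∀ m n : ℕ, m < n → GenLt (rep m) (rep n))
    (x : ℕ × ℕ → Γ)
    (hx : ∀ m n : ℕ, x (m, n) = τ (List.foldl stepA q₀ (padHash (rep m) (rep n))))
    (w : ℕ × ℕ → QA × QL × QL)
    (hw0 : w (0, 0) = (q₀, ℓ₀, ℓ₀))
    (hwrec : ∀ m n i j : ℕ, i ≤ r → j ≤ r →
      w ((r + 1) * m + i, (r + 1) * n + j) =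
        productStep stepA stepL (w (m, n)) (letter r i, letter r j)) :
    (∀ m n n' : ℕ, (w (m, n)).2.1 = (w (m, n')).2.1) ∧
    (∀ m m' n : ℕ, (w (m, n)).2.2 = (w (m', n)).2.2) ∧
    (∀ m n : ℕ, ¬((w (m, n)).2.1 ∈ FL ∧ (w (m, n)).2.2 ∈ FL) →
      ((w (m, 0)).2.1 ∉ FL ∧
        ∀ n' : ℕ, ¬((w (m, n')).2.1 ∈ FL ∧ (w (m, n')).2.2 ∈ FL)) ∨
      ((w (0, n)).2.2 ∉ FL ∧
        ∀ m' : ℕ, ¬((w (m', n)).2.1 ∈ FL ∧ (w (m', n)).2.2 ∈ FL))) := by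
  have hr2 : 1 < r + 1 := by omega
  have key : ∀ M N : ℕ, w (M, N) =
      productStep stepA stepL (w (M / (r + 1), N / (r + 1)))
        (letter r (M % (r + 1)), letter r (N % (r + 1))) := by
    intro M N
    have h1 := hwrec (M / (r + 1)) (N / (r + 1)) (M % (r + 1)) (N % (r + 1))
      (Nat.le_of_lt_succ (Nat.mod_lt _ (by omega)))
      (Nat.le_of_lt_succ (Nat.mod_lt _ (by omega)))
    rwa [Nat.div_add_mod, Nat.div_add_mod] at h1
  have hlet0 : letter r 0 = none := by simp [letter]
  have col0 : ∀ N, (w (0, N)).2.1 = ℓ₀ := by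
    intro N
    induction N using Nat.strong_induction_on with
    | _ N ih =>
      rcases Nat.eq_zero_or_pos N with h | h
      · subst h; rw [hw0]
      · rw [key 0 N]
        simp only [productStep, Nat.zero_div, Nat.zero_mod, hlet0]
        rw [ih (N / (r + 1)) (Nat.div_lt_self h hr2), hL0]
  have row0 : ∀ M, (w (M, 0)).2.2 = ℓ₀ := by
    intro M
    induction M using Nat.strong_induction_on with
    | _ M ih =>
      rcases Nat.eq_zero_or_pos M with h | h
      · subst h; rw [hw0]
      · rw [key M 0]
        simp only [productStep, Nat.zero_div, Nat.zero_mod, hlet0]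
        rw [ih (M / (r + 1)) (Nat.div_lt_self h hr2), hL0]
  have colconst : ∀ m n n' : ℕ, (w (m, n)).2.1 = (w (m, n')).2.1 := by
    intro M
    induction M using Nat.strong_induction_on with
    | _ M ih =>
      intro N N'
      rcases Nat.eq_zero_or_pos M with h | h
      · subst h; rw [col0, col0]
      · rw [key M N, key M N']
        simp only [productStep]
        rw [ih (M / (r + 1)) (Nat.div_lt_self h hr2) (N / (r + 1)) (N' / (r + 1))]
  have rowconst : ∀ m m' n : ℕ, (w (m, n)).2.2 = (w (m', n)).2.2 := by
    have aux : ∀ n m m' : ℕ, (w (m, n)).2.2 = (w (m', n)).2.2 := by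
      intro N
      induction N using Nat.strong_induction_on with
      | _ N ih =>
        intro M M'
        rcases Nat.eq_zero_or_pos N with h | h
        · subst h; rw [row0, row0]
        · rw [key M N, key M' N]
          simp only [productStep]
          rw [ih (N / (r + 1)) (Nat.div_lt_self h hr2) (M / (r + 1)) (M' / (r + 1))]
    exact fun m m' n => aux n m m'
  refine ⟨colconst, rowconst, ?_⟩
  intro m n hmn
  by_cases h1 : (w (m, n)).2.1 ∈ FL
  · right
    have hg : (w (m, n)).2.2 ∉ FL := fun h2 => hmn ⟨h1, h2⟩
    refine ⟨by rw [← rowconst m 0 n]; exact hg, fun m' ⟨_, h2⟩ => hg ?_⟩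
    rw [rowconst m m' n]; exact h2
  · left
    refine ⟨by rw [← colconst m n 0]; exact h1, fun n' ⟨h2, _⟩ => h1 ?_⟩
    rw [colconst m n n']; exact h2
end

section
/- Let x : ℕ×ℕ → Γ be S-automatic for an abstract numeration system S=(L,Σ,<) with ε ∈ L, generated by a DFAO 𝒜=(Q_𝒜,q₀,(Σ∪{#})²,δ_𝒜,Γ,τ_𝒜) with δ_𝒜(q,(#,#))=q, and let 𝒫 be the product automaton with canonical 2-dimensional morphism μ_𝒫 and fixed point w = μ_𝒫^ω(p₀). Let c : ℕ → ℕ be the strictly increasing enumeration of the set of indices m such that the second component of w(m,0) belongs to F_ℒ, and let r' : ℕ → ℕ be the strictly increasing enumeration of the set of indices n such that the third component of w(0,n) belongs to F_ℒ (both sets are infinite). Then for all m,n ≥ 0: w(c(m), r'(n)) = δ(p₀, (rep_S(m), rep_S(n))^#), and consequently τ_𝒜 applied to the first component of w(c(m), r'(n)) equals x(m,n). -/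
namespace Stmt15Aux

def dig {r : ℕ} (o : Option (Fin r)) : ℕ := o.elim 0 (fun d => (d : ℕ) + 1)

def lstep (r : ℕ) (acc : ℕ) (o : Option (Fin r)) : ℕ := (r + 1) * acc + dig o

def valO (r : ℕ) (a : List (Option (Fin r))) : ℕ := a.foldl (lstep r) 0

def valW (r : ℕ) (u : List (Fin r)) : ℕ := valO r (u.map some)

variable {r : ℕ}

lemma dig_le (o : Option (Fin r)) : dig o ≤ r := by
  cases o with
  | none => simp [dig]
  | some d => simp [dig]

lemma letter_dig (o : Option (Fin r)) : letter r (dig o) = o := by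
  cases o with
  | none => simp [dig, letter]
  | some d =>
    have h : 0 < (d : ℕ) + 1 ∧ (d : ℕ) + 1 - 1 < r := ⟨Nat.succ_pos _, by simpa using d.isLt⟩
    simp [dig, letter, h]

lemma dig_letter {s : ℕ} (hs : s ≤ r) : dig (letter r s) = s := by
  unfold letter
  by_cases h : 0 < s ∧ s - 1 < r
  · simp [h, dig]; omega
  · have : s = 0 := by omega
    simp [this, dig]

lemma valO_concat (a : List (Option (Fin r))) (o : Option (Fin r)) :
    valO r (a ++ [o]) = (r + 1) * valO r a + dig o := by
  simp [valO, List.foldl_append, lstep]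

lemma valO_replicate_append (k : ℕ) (a : List (Option (Fin r))) :
    valO r (List.replicate k none ++ a) = valO r a := by
  have h : ∀ k : ℕ, List.foldl (lstep r) 0 (List.replicate k (none : Option (Fin r))) = 0 := by
    intro k
    induction k with
    | zero => simp
    | succ k ih => simpa [List.replicate_succ, lstep, dig] using ih
  simp [valO, List.foldl_append, h]

lemma foldl_lstep (a : List (Option (Fin r))) (acc : ℕ) :
    a.foldl (lstep r) acc = acc * (r + 1) ^ a.length + valO r a := by
  induction a using List.reverseRecOn with
  | nil => simp [valO]
  | append_singleton a o ih =>
    simp only [List.foldl_append, List.foldl_cons, List.foldl_nil, ih, valO_concat,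
      List.length_append, List.length_singleton, lstep]
    ring

lemma valO_lt (a : List (Option (Fin r))) : valO r a < (r + 1) ^ a.length := by
  induction a using List.reverseRecOn with
  | nil => simp [valO]
  | append_singleton a o ih =>
    have h1 : dig o ≤ r := dig_le o
    have := valO_concat a o
    have hp : (r + 1) ^ (a ++ [o]).length = (r + 1) ^ a.length * (r + 1) := by
      simp [pow_succ]
    rw [this, hp]
    nlinarith

lemma valW_cons (c : Fin r) (u : List (Fin r)) :
    valW r (c :: u) = ((c : ℕ) + 1) * (r + 1) ^ u.length + valW r u := by
  have : valW r (c :: u) = (u.map some).foldl (lstep r) ((c : ℕ) + 1) := by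
    simp [valW, valO, lstep, dig]
  rw [this, foldl_lstep]
  simp [valW]

lemma valW_lt (u : List (Fin r)) : valW r u < (r + 1) ^ u.length := by
  simpa [valW] using valO_lt (u.map some)

lemma lex_mono : ∀ u v : List (Fin r), u.length = v.length →
    List.Lex (· < ·) u v → valW r u < valW r v := by
  intro u v hlen h
  induction h with
  | nil => simp at hlen
  | @rel a l₁ b l₂ hab =>
    have hl : l₁.length = l₂.length := by simpa using hlen
    rw [valW_cons, valW_cons, hl]
    have h1 : valW r l₁ < (r + 1) ^ l₂.length := hl ▸ valW_lt l₁
    have h2 : (a : ℕ) + 1 < (b : ℕ) + 1 := by exact_mod_cast Nat.succ_lt_succ hab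
    nlinarith [Nat.zero_le (valW r l₂)]
  | @cons a l₁ l₂ h ih =>
    have hl : l₁.length = l₂.length := by simpa using hlen
    rw [valW_cons, valW_cons, hl]
    exact Nat.add_lt_add_left (ih hl) _

lemma genlt_mono {u v : List (Fin r)}
    (h : u.length < v.length ∨ (u.length = v.length ∧ List.Lex (· < ·) u v)) :
    valW r u < valW r v := by
  rcases h with h | ⟨h1, h2⟩
  · cases v with
    | nil => simp at h
    | cons c v' =>
      have hu : u.length ≤ v'.length := by simpa using Nat.lt_succ_iff.mp h
      calc valW r u < (r + 1) ^ u.length := valW_lt u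
        _ ≤ (r + 1) ^ v'.length := Nat.pow_le_pow_right (Nat.succ_pos r) hu
        _ ≤ ((c : ℕ) + 1) * (r + 1) ^ v'.length := Nat.le_mul_of_pos_left _ (Nat.succ_pos _)
        _ ≤ valW r (c :: v') := by rw [valW_cons]; omega
  · exact lex_mono u v h1 h2

lemma valO_surj (hr : 1 ≤ r) : ∀ k : ℕ, ∃ a : List (Option (Fin r)), valO r a = k := by
  intro k
  induction k using Nat.strong_induction_on with
  | _ k ih =>
    rcases Nat.eq_zero_or_pos k with rfl | hk
    · exact ⟨[], rfl⟩
    · have hq : k / (r + 1) < k := Nat.div_lt_self hk (by omega)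
      obtain ⟨a, ha⟩ := ih _ hq
      refine ⟨a ++ [letter r (k % (r + 1))], ?_⟩
      rw [valO_concat, ha, dig_letter (Nat.lt_succ_iff.mp (Nat.mod_lt k (Nat.succ_pos r)))]
      exact Nat.div_add_mod k (r + 1)

lemma fst_foldl {QA QL Δ : Type*} (stepA : QA → Option Δ × Option Δ → QA)
    (stepL : QL → Option Δ → QL) :
    ∀ (l : List (Option Δ × Option Δ)) (p : QA × QL × QL),
      (l.foldl (productStep stepA stepL) p).1 = l.foldl stepA p.1 := by
  intro l
  induction l with
  | nil => intro p; rfl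
  | cons ab l ih => intro p; exact ih (productStep stepA stepL p ab)

lemma snd1_foldl {QA QL Δ : Type*} (stepA : QA → Option Δ × Option Δ → QA)
    (stepL : QL → Option Δ → QL) :
    ∀ (l : List (Option Δ × Option Δ)) (p : QA × QL × QL),
      (l.foldl (productStep stepA stepL) p).2.1 = (l.map Prod.fst).foldl stepL p.2.1 := by
  intro l
  induction l with
  | nil => intro p; rfl
  | cons ab l ih => intro p; exact ih (productStep stepA stepL p ab)

lemma snd2_foldl {QA QL Δ : Type*} (stepA : QA → Option Δ × Option Δ → QA)
    (stepL : QL → Option Δ → QL) :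
    ∀ (l : List (Option Δ × Option Δ)) (p : QA × QL × QL),
      (l.foldl (productStep stepA stepL) p).2.2 = (l.map Prod.snd).foldl stepL p.2.2 := by
  intro l
  induction l with
  | nil => intro p; rfl
  | cons ab l ih => intro p; exact ih (productStep stepA stepL p ab)



lemma lemA {QA QL : Type*} (r : ℕ)
    (stepA : QA → Option (Fin r) × Option (Fin r) → QA) (q₀ : QA)
    (stepL : QL → Option (Fin r) → QL) (ℓ₀ : QL)
    (w : ℕ × ℕ → QA × QL × QL)
    (hw0 : w (0, 0) = (q₀, ℓ₀, ℓ₀))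
    (hwrec : ∀ m n i j : ℕ, i ≤ r → j ≤ r →
      w ((r + 1) * m + i, (r + 1) * n + j) =
        productStep stepA stepL (w (m, n)) (letter r i, letter r j)) :
    ∀ a b : List (Option (Fin r)), a.length = b.length →
      w (valO r a, valO r b) = (a.zip b).foldl (productStep stepA stepL) (q₀, ℓ₀, ℓ₀) := by
  intro a
  induction a using List.reverseRecOn with
  | nil =>
    intro b hb
    have : b = [] := List.eq_nil_of_length_eq_zero hb.symm
    subst this
    simpa [valO] using hw0
  | append_singleton a o ih =>
    intro b hb
    have hbne : b ≠ [] := by rintro rfl; simp at hb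
    obtain ⟨b', o', rfl⟩ : ∃ b' o', b = b' ++ [o'] :=
      ⟨b.dropLast, b.getLast hbne, (List.dropLast_append_getLast hbne).symm⟩
    have hlen : a.length = b'.length := by simpa using hb
    rw [valO_concat, valO_concat, hwrec _ _ _ _ (dig_le o) (dig_le o'),
      letter_dig, letter_dig, ih b' hlen, List.zip_append hlen]
    simp [List.foldl_append]

end Stmt15Aux


open Stmt15Aux in
/-- In the setting of the product automaton `𝒫` (see Statement 14):
the set of column indices `m` whose `ℒ`-state (second component of `w(m,0)`) is final
and the set of row indices `n` whose `ℒ`-state (third component of `w(0,n)`) is final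
are both infinite; and if `c` and `r'` are their strictly increasing enumerations, then
for all `m, n ≥ 0`, `w(c(m), r'(n)) = δ(p₀, (rep_S(m), rep_S(n))^#)` and consequently
`τ_𝒜` applied to the first component of `w(c(m), r'(n))` equals `x(m,n)`. -/
theorem stmt_15 {Γ QA QL : Type*} [Fintype QA] [Fintype QL]
    (r : ℕ) (hr : 1 ≤ r)
    (stepA : QA → Option (Fin r) × Option (Fin r) → QA) (q₀ : QA) (τ : QA → Γ)
    (hA : ∀ q, stepA q (none, none) = q)
    (stepL : QL → Option (Fin r) → QL) (ℓ₀ : QL) (FL : Set QL)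
    (hL0 : stepL ℓ₀ none = ℓ₀)
    (L : Set (List (Fin r)))
    (hacc : ∀ v : List (Option (Fin r)),
      v.foldl stepL ℓ₀ ∈ FL ↔
        ∃ (k : ℕ) (u : List (Fin r)), u ∈ L ∧ v = List.replicate k none ++ u.map some)
    (hε : ([] : List (Fin r)) ∈ L)
    (rep : ℕ → List (Fin r))
    (hmem : ∀ n, rep n ∈ L) (hsurj : ∀ u ∈ L, ∃ n, rep n = u)
    (hmono : ∀ m n : ℕ, m < n → GenLt (rep m) (rep n))
    (x : ℕ × ℕ → Γ)
    (hx : ∀ m n : ℕ, x (m, n) = τ (List.foldl stepA q₀ (padHash (rep m) (rep n))))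
    (w : ℕ × ℕ → QA × QL × QL)
    (hw0 : w (0, 0) = (q₀, ℓ₀, ℓ₀))
    (hwrec : ∀ m n i j : ℕ, i ≤ r → j ≤ r →
      w ((r + 1) * m + i, (r + 1) * n + j) =
        productStep stepA stepL (w (m, n)) (letter r i, letter r j)) :
    {k : ℕ | (w (k, 0)).2.1 ∈ FL}.Infinite ∧
    {k : ℕ | (w (0, k)).2.2 ∈ FL}.Infinite ∧
    ∀ c r' : ℕ → ℕ, StrictMono c → StrictMono r' →
      (∀ k : ℕ, (w (k, 0)).2.1 ∈ FL ↔ ∃ m, c m = k) →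
      (∀ k : ℕ, (w (0, k)).2.2 ∈ FL ↔ ∃ n, r' n = k) →
      ∀ m n : ℕ,
        w (c m, r' n) =
          List.foldl (productStep stepA stepL) (q₀, ℓ₀, ℓ₀)
            (padHash (rep m) (rep n)) ∧
        τ (w (c m, r' n)).1 = x (m, n) := by
  have key := lemA r stepA q₀ stepL ℓ₀ w hw0 hwrec
  -- value computations for the two key digit-word families
  have hvrep : ∀ k : ℕ, valO r (List.replicate k (none : Option (Fin r))) = 0 := by
    intro k; simpa [valO] using valO_replicate_append (r := r) k []
  -- characterization of the first set
  have hset1 : ∀ k : ℕ, (w (k, 0)).2.1 ∈ FL ↔ ∃ m : ℕ, valW r (rep m) = k := by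
    intro k
    constructor
    · intro hk
      obtain ⟨a, ha⟩ := valO_surj hr k
      set b := List.replicate a.length (none : Option (Fin r)) with hbdef
      have hlen : a.length = b.length := by simp [hbdef]
      have hw : w (k, 0) = (a.zip b).foldl (productStep stepA stepL) (q₀, ℓ₀, ℓ₀) := by
        rw [← ha, ← hvrep a.length]; exact key a b hlen
      have hfold : (w (k, 0)).2.1 = a.foldl stepL ℓ₀ := by
        rw [hw, snd1_foldl, List.map_fst_zip (le_of_eq hlen)]
      rw [hfold, hacc] at hk
      obtain ⟨k', u, hu, rfl⟩ := hk
      obtain ⟨m, rfl⟩ := hsurj u hu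
      exact ⟨m, by rw [← ha, valO_replicate_append]; rfl⟩
    · rintro ⟨m, rfl⟩
      set u := rep m with hudef
      set a := u.map some with hadef
      set b := List.replicate u.length (none : Option (Fin r)) with hbdef
      have hlen : a.length = b.length := by simp [hadef, hbdef]
      have hw : w (valW r u, 0) = (a.zip b).foldl (productStep stepA stepL) (q₀, ℓ₀, ℓ₀) := by
        rw [← hvrep u.length]; exact key a b hlen
      have hfold : (w (valW r u, 0)).2.1 = a.foldl stepL ℓ₀ := by
        rw [hw, snd1_foldl, List.map_fst_zip (le_of_eq hlen)]
      rw [hfold, hacc]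
      exact ⟨0, u, hmem m, by simp [hadef]⟩
  have hset2 : ∀ k : ℕ, (w (0, k)).2.2 ∈ FL ↔ ∃ n : ℕ, valW r (rep n) = k := by
    intro k
    constructor
    · intro hk
      obtain ⟨a, ha⟩ := valO_surj hr k
      set b := List.replicate a.length (none : Option (Fin r)) with hbdef
      have hlen : b.length = a.length := by simp [hbdef]
      have hw : w (0, k) = (b.zip a).foldl (productStep stepA stepL) (q₀, ℓ₀, ℓ₀) := by
        rw [← ha, ← hvrep a.length]; exact key b a hlen
      have hfold : (w (0, k)).2.2 = a.foldl stepL ℓ₀ := by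
        rw [hw, snd2_foldl, List.map_snd_zip (le_of_eq hlen.symm)]
      rw [hfold, hacc] at hk
      obtain ⟨k', u, hu, rfl⟩ := hk
      obtain ⟨m, rfl⟩ := hsurj u hu
      exact ⟨m, by rw [← ha, valO_replicate_append]; rfl⟩
    · rintro ⟨m, rfl⟩
      set u := rep m with hudef
      set a := u.map some with hadef
      set b := List.replicate u.length (none : Option (Fin r)) with hbdef
      have hlen : b.length = a.length := by simp [hadef, hbdef]
      have hw : w (0, valW r u) = (b.zip a).foldl (productStep stepA stepL) (q₀, ℓ₀, ℓ₀) := by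
        rw [← hvrep u.length]; exact key b a hlen
      have hfold : (w (0, valW r u)).2.2 = a.foldl stepL ℓ₀ := by
        rw [hw, snd2_foldl, List.map_snd_zip (le_of_eq hlen.symm)]
      rw [hfold, hacc]
      exact ⟨0, u, hmem m, by simp [hadef]⟩
  set f : ℕ → ℕ := fun m => valW r (rep m) with hfdef
  have hfmono : StrictMono f := fun m n h => genlt_mono (hmono m n h)
  have hS1 : {k : ℕ | (w (k, 0)).2.1 ∈ FL} = Set.range f := by
    ext k; exact hset1 k
  have hS2 : {k : ℕ | (w (0, k)).2.2 ∈ FL} = Set.range f := by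
    ext k; exact hset2 k
  refine ⟨by rw [hS1]; exact Set.infinite_range_of_injective hfmono.injective,
         by rw [hS2]; exact Set.infinite_range_of_injective hfmono.injective, ?_⟩
  intro c r' hc hr' hcc hrr m n
  have hcf : c = f := by
    refine (hc.range_inj hfmono).mp ?_
    ext k
    rw [← hS1]
    exact ⟨fun ⟨m, hm⟩ => (hcc k).mpr ⟨m, hm⟩, fun h => (hcc k).mp h⟩
  have hrf : r' = f := by
    refine (hr'.range_inj hfmono).mp ?_
    ext k
    rw [← hS2]
    exact ⟨fun ⟨m, hm⟩ => (hrr k).mpr ⟨m, hm⟩, fun h => (hrr k).mp h⟩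
  subst hcf hrf
  set u := rep m with hudef
  set v := rep n with hvdef
  set A := List.replicate (max u.length v.length - u.length) (none : Option (Fin r)) ++ u.map some with hAdef
  set B := List.replicate (max u.length v.length - v.length) (none : Option (Fin r)) ++ v.map some with hBdef
  have hlen : A.length = B.length := by
    simp [hAdef, hBdef]
  have eA : valO r A = f m := by rw [hAdef, valO_replicate_append]; rfl
  have eB : valO r B = f n := by rw [hBdef, valO_replicate_append]; rfl
  have hmain : w (f m, f n) =
      List.foldl (productStep stepA stepL) (q₀, ℓ₀, ℓ₀) (padHash u v) := by
    rw [← eA, ← eB, key A B hlen]; rfl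
  refine ⟨hmain, ?_⟩
  rw [hmain, fst_foldl, hx m n]
end
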